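/- arXiv:1404.3187 — 6 statements merged into one kernel-verified Lean document; each statement's English description precedes it below -/
import Mathlib

section
/- Let f : ℝⁿ → ℝ be a convex function whose infimum m = inf f (possibly −∞) is not attained. Then there exists a unit vector u ∈ ℝⁿ such that f(x + t·u) ≤ f(x) for every x ∈ ℝⁿ and every t ≥ 0; equivalently, u is a common recession direction of all nonempty sublevel sets {x : f(x) ≤ c}. -/
/-- A unit vector `u` is a recession direction of `C` if `x + t • u ∈ C`
for every `x ∈ C` and `t ≥ 0`. -/
def IsRecessionDirection {n : ℕ} (C : Set (EuclideanSpace ℝ (Fin n)))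
    (u : EuclideanSpace ℝ (Fin n)) : Prop :=
  ‖u‖ = 1 ∧ ∀ x ∈ C, ∀ t : ℝ, 0 ≤ t → x + t • u ∈ C


theorem stmt2 {n : ℕ} (f : EuclideanSpace ℝ (Fin n) → ℝ)
    (hf : ConvexOn ℝ Set.univ f)
    (hnot : ¬ ∃ x : EuclideanSpace ℝ (Fin n), ∀ y, f x ≤ f y) :
    ∃ u : EuclideanSpace ℝ (Fin n), ‖u‖ = 1 ∧
      ∀ x : EuclideanSpace ℝ (Fin n), ∀ t : ℝ, 0 ≤ t → f (x + t • u) ≤ f x := by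
  classical
  rcases Nat.eq_zero_or_pos n with hn | hn
  · exfalso
    apply hnot
    refine ⟨0, fun y => ?_⟩
    subst hn
    have : y = 0 := Subsingleton.elim _ _
    simp [this]
  have hcont : Continuous f := by
    have h := hf.continuousOn isOpen_univ
    rw [← continuousOn_univ]
    exact h
  push_neg at hnot
  have key : ∀ k : ℕ, ∃ x : EuclideanSpace ℝ (Fin n), (k : ℝ) < ‖x‖ ∧ f x ≤ f 0 := by
    intro k
    obtain ⟨p, hp, hpmin⟩ := (isCompact_closedBall (0 : EuclideanSpace ℝ (Fin n)) k).exists_isMinOn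
      ⟨0, by simp⟩ hcont.continuousOn
    obtain ⟨y, hy⟩ := hnot p
    refine ⟨y, ?_, le_trans hy.le (hpmin (by simp))⟩
    by_contra h
    push_neg at h
    exact absurd (hpmin (by simpa [Metric.mem_closedBall, dist_zero_right] using h)) (not_le.2 hy)
  choose x hxn hxf using key
  have hxpos : ∀ k, 0 < ‖x k‖ := fun k => lt_of_le_of_lt (Nat.cast_nonneg k) (hxn k)
  have husph : ∀ k, (‖x k‖⁻¹ • x k) ∈ Metric.sphere (0 : EuclideanSpace ℝ (Fin n)) 1 := by
    intro k
    simp [norm_smul, abs_of_pos (inv_pos.2 (hxpos k)), inv_mul_cancel₀ (hxpos k).ne']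
  obtain ⟨u, humem, φ, hφ, hφt⟩ :=
    (isCompact_sphere (0 : EuclideanSpace ℝ (Fin n)) 1).tendsto_subseq husph
  have hu : ‖u‖ = 1 := by simpa [mem_sphere_zero_iff_norm] using humem
  refine ⟨u, hu, ?_⟩
  intro z t ht
  set y : ℕ → EuclideanSpace ℝ (Fin n) := fun k => x (φ k) with hy
  have hyn : ∀ k : ℕ, (k : ℝ) ≤ ‖y k‖ := by
    intro k
    exact le_trans (by exact_mod_cast hφ.le_apply) (hxn (φ k)).le
  have hynpos : ∀ k, 0 < ‖y k‖ := fun k => hxpos (φ k)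
  set d : ℕ → ℝ := fun k => ‖y k - z‖ with hd
  have hdtop : Filter.Tendsto d Filter.atTop Filter.atTop := by
    apply Filter.tendsto_atTop_mono (fun k => ?_)
      (Filter.tendsto_atTop_add_const_right _ (-‖z‖) tendsto_natCast_atTop_atTop)
    have h1 := norm_sub_norm_le (y k) z
    have h2 := hyn k
    simp only [hd]
    linarith
  have hinv0 : Filter.Tendsto (fun k => (d k)⁻¹) Filter.atTop (nhds 0) :=
    Filter.Tendsto.inv_tendsto_atTop hdtop
  have hratio : Filter.Tendsto (fun k => ‖y k‖ / d k) Filter.atTop (nhds 1) := by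
    have h0 : Filter.Tendsto (fun k => (‖y k‖ - d k) / d k) Filter.atTop (nhds 0) := by
      refine squeeze_zero_norm' (a := fun k => ‖z‖ / d k) ?_ ?_
      · filter_upwards [hdtop.eventually_gt_atTop 0] with k hk
        rw [Real.norm_eq_abs, abs_div, abs_of_pos hk, div_le_div_iff_of_pos_right hk]
        calc |‖y k‖ - d k| ≤ ‖y k - (y k - z)‖ := abs_norm_sub_norm_le _ _
          _ = ‖z‖ := by rw [sub_sub_cancel]
      · simpa using Filter.Tendsto.div_atTop tendsto_const_nhds hdtop
    have h1 := h0.add (tendsto_const_nhds (x := (1:ℝ)))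
    rw [zero_add] at h1
    apply h1.congr'
    filter_upwards [hdtop.eventually_gt_atTop 0] with k hk
    field_simp
    ring
  have hdir : Filter.Tendsto (fun k => (d k)⁻¹ • (y k - z)) Filter.atTop (nhds u) := by
    have h1 : Filter.Tendsto (fun k => (‖y k‖ / d k) • (‖y k‖⁻¹ • y k)) Filter.atTop
        (nhds ((1:ℝ) • u)) := hratio.smul hφt
    have h2 : Filter.Tendsto (fun k => (d k)⁻¹ • z) Filter.atTop
        (nhds ((0:ℝ) • z)) := hinv0.smul tendsto_const_nhds
    have h3 := h1.sub h2
    rw [one_smul, zero_smul, sub_zero] at h3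
    apply h3.congr
    intro k
    rw [smul_smul, smul_sub]
    congr 2
    rw [div_mul_eq_mul_div, mul_inv_cancel₀ (hynpos k).ne', one_div]
  have hzlim : Filter.Tendsto (fun k => z + (t * (d k)⁻¹) • (y k - z)) Filter.atTop
      (nhds (z + t • u)) := by
    refine Filter.Tendsto.const_add z ?_
    have h1 := hdir.const_smul t
    apply h1.congr
    intro k
    rw [mul_smul]
  have hval : Filter.Tendsto (fun k => (1 - t * (d k)⁻¹) * f z + (t * (d k)⁻¹) * f 0)
      Filter.atTop (nhds (f z)) := by
    have hl : Filter.Tendsto (fun k => t * (d k)⁻¹) Filter.atTop (nhds 0) := by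
      simpa using hinv0.const_mul t
    have h1 := (((tendsto_const_nhds (x := (1:ℝ))).sub hl).mul
      (tendsto_const_nhds (x := f z))).add (hl.mul (tendsto_const_nhds (x := f 0)))
    simpa using h1
  refine le_of_tendsto_of_tendsto ((hcont.tendsto _).comp hzlim) hval ?_
  filter_upwards [hdtop.eventually_ge_atTop (max t 1)] with k hk
  have hdk1 : (1:ℝ) ≤ d k := le_trans (le_max_right _ _) hk
  have hdkpos : (0:ℝ) < d k := lt_of_lt_of_le one_pos hdk1
  have hl1 : t * (d k)⁻¹ ≤ 1 := by
    rw [← div_eq_mul_inv]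
    exact div_le_one_of_le₀ (le_trans (le_max_left _ _) hk) (by linarith)
  have hl0 : 0 ≤ t * (d k)⁻¹ := mul_nonneg ht (inv_nonneg.2 hdkpos.le)
  have heq : z + (t * (d k)⁻¹) • (y k - z)
      = (1 - t * (d k)⁻¹) • z + (t * (d k)⁻¹) • y k := by
    rw [smul_sub, sub_smul, one_smul]; abel
  show f (z + (t * (d k)⁻¹) • (y k - z)) ≤ _
  rw [heq]
  calc f ((1 - t * (d k)⁻¹) • z + (t * (d k)⁻¹) • y k)
      ≤ (1 - t * (d k)⁻¹) * f z + (t * (d k)⁻¹) * f (y k) :=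
        hf.2 (Set.mem_univ z) (Set.mem_univ (y k)) (by linarith) hl0 (by ring)
    _ ≤ (1 - t * (d k)⁻¹) * f z + (t * (d k)⁻¹) * f 0 := by
        have h := hxf (φ k)
        nlinarith
end

section
/- Let f : ℝⁿ → ℝ be a convex function attaining its infimum m, and let M = {x : f(x) = m}, a nonempty closed convex set. Let L = {v ∈ ℝⁿ : x + t·v ∈ M for all x ∈ M and all t ∈ ℝ} (a linear subspace, the lineality space of M), fix x₀ ∈ M and set T = M ∩ (x₀ + L^⊥). Then M = {t + v : t ∈ T, v ∈ L}, T contains no affine line, and if T is unbounded then T has at least one recession direction and there exist a unit vector w and ε > 0 such that ⟨u, w⟩ ≥ ε for every recession direction u of T. -/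
open scoped RealInnerProductSpace

set_option maxHeartbeats 1000000 in
theorem stmt3 {n : ℕ} (f : EuclideanSpace ℝ (Fin n) → ℝ)
    (hf : ConvexOn ℝ Set.univ f)
    (x₀ : EuclideanSpace ℝ (Fin n)) (hx₀ : ∀ y, f x₀ ≤ f y)
    -- the set of minimizers `M = {x : f x = m}` where `m = f x₀` is the infimum
    (M : Set (EuclideanSpace ℝ (Fin n))) (hM : M = {x | f x = f x₀})
    -- the lineality space of `M`
    (L : Set (EuclideanSpace ℝ (Fin n)))
    (hL : L = {v | ∀ x ∈ M, ∀ t : ℝ, x + t • v ∈ M})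
    -- `T = M ∩ (x₀ + L^⊥)`
    (T : Set (EuclideanSpace ℝ (Fin n)))
    (hT : T = M ∩ {x | ∀ v ∈ L, ⟪x - x₀, v⟫ = 0}) :
    M = {p | ∃ t ∈ T, ∃ v ∈ L, p = t + v} ∧
    (¬ ∃ (x u : EuclideanSpace ℝ (Fin n)), u ≠ 0 ∧ ∀ s : ℝ, x + s • u ∈ T) ∧
    (¬ Bornology.IsBounded T →
      (∃ u, IsRecessionDirection T u) ∧
      ∃ (w : EuclideanSpace ℝ (Fin n)) (ε : ℝ), ‖w‖ = 1 ∧ 0 < ε ∧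
        ∀ u, IsRecessionDirection T u → ε ≤ ⟪u, w⟫) := by
  classical
  have hfc : Continuous f := by
    rw [← continuousOn_univ]
    exact hf.continuousOn isOpen_univ
  have hx₀M : x₀ ∈ M := by rw [hM]; exact rfl
  have hMconv : Convex ℝ M := by
    rw [hM]
    intro x hx y hy a b ha hb hab
    simp only [Set.mem_setOf_eq] at hx hy ⊢
    have h1 : f (a • x + b • y) ≤ a * f x + b * f y :=
      hf.2 (Set.mem_univ x) (Set.mem_univ y) ha hb hab
    have h2 := hx₀ (a • x + b • y)
    rw [hx, hy] at h1
    have h3 : a * f x₀ + b * f x₀ = f x₀ := by rw [← add_mul, hab, one_mul]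
    linarith
  have hMclosed : IsClosed M := by
    rw [hM]; exact isClosed_eq hfc continuous_const
  -- a line contained in `M` has its direction in `L`
  have hline : ∀ x u : EuclideanSpace ℝ (Fin n),
      (∀ s : ℝ, x + s • u ∈ M) → u ∈ L := by
    intro x u hxu
    rw [hL]
    intro y hy t
    rw [hM] at hy ⊢
    simp only [Set.mem_setOf_eq] at hy ⊢
    refine le_antisymm ?_ (hx₀ _)
    have key : ∀ k : ℕ, f (y + t • u + (1/((k:ℝ)+1)) • (x - y)) ≤ f x₀ := by
      intro k
      set lam : ℝ := 1/((k:ℝ)+1) with hlam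
      have hlam0 : 0 < lam := by positivity
      have hlam1 : lam ≤ 1 := by
        rw [hlam, div_le_one (by positivity)]
        linarith [Nat.cast_nonneg (α := ℝ) k]
      have h3 : lam • ((t/lam) • u) = t • u := by
        rw [smul_smul, mul_div_cancel₀ t hlam0.ne']
      have heq : y + t • u + lam • (x - y)
          = (1 - lam) • y + lam • (x + (t / lam) • u) := by
        rw [smul_add, h3]; module
      rw [heq]
      have hconv := hf.2 (Set.mem_univ y) (Set.mem_univ (x + (t/lam) • u))
        (by linarith : (0:ℝ) ≤ 1 - lam) hlam0.le (by ring)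
      have hx' : f (x + (t/lam) • u) = f x₀ := by
        have := hxu (t/lam); rw [hM] at this; exact this
      calc f ((1 - lam) • y + lam • (x + (t / lam) • u))
          ≤ (1 - lam) * f y + lam * f (x + (t/lam) • u) := hconv
        _ = f x₀ := by rw [hy, hx']; ring
    have htend : Filter.Tendsto
        (fun k : ℕ => y + t • u + (1/((k:ℝ)+1)) • (x - y))
        Filter.atTop (nhds (y + t • u)) := by
      have h1 : Filter.Tendsto (fun k : ℕ => (1/((k:ℝ)+1))) Filter.atTop (nhds 0) :=
        tendsto_one_div_add_atTop_nhds_zero_nat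
      have h2 := h1.smul_const (x - y)
      rw [zero_smul] at h2
      simpa using tendsto_const_nhds.add h2
    exact le_of_tendsto ((hfc.tendsto _).comp htend) (Filter.Eventually.of_forall key)
  -- `L` is a linear subspace
  have hL0 : (0 : EuclideanSpace ℝ (Fin n)) ∈ L := by
    rw [hL]; intro x hx t; simpa using hx
  have hLsmul : ∀ (c : ℝ) v, v ∈ L → c • v ∈ L := by
    intro c v hv; rw [hL] at hv ⊢; intro x hx t
    rw [smul_smul]
    exact hv x hx (t*c)
  have hLadd : ∀ v w, v ∈ L → w ∈ L → v + w ∈ L := by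
    intro v w hv hw; rw [hL] at hv hw ⊢; intro x hx t
    have h := hw (x + t • v) (hv x hx t) t
    rw [smul_add]
    rw [← add_assoc]
    exact h
  let K : Submodule ℝ (EuclideanSpace ℝ (Fin n)) :=
    { carrier := L
      add_mem' := fun hv hw => hLadd _ _ hv hw
      zero_mem' := hL0
      smul_mem' := fun c v hv => hLsmul c v hv }
  -- Part 1
  have part1 : M = {p | ∃ t ∈ T, ∃ v ∈ L, p = t + v} := by
    ext x
    constructor
    · intro hx
      obtain ⟨p, hp, q, hq, hpq⟩ := K.exists_add_mem_mem_orthogonal (x - x₀)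
      have hpL : p ∈ L := hp
      refine ⟨x - p, ?_, p, hpL, by abel⟩
      rw [hT]
      constructor
      · have hp' := hpL
        rw [hL] at hp'
        have := hp' x hx (-1)
        simpa [sub_eq_add_neg] using this
      · intro v hv
        have hxq : x - p - x₀ = q := by
          have : x - x₀ = p + q := hpq
          rw [sub_sub, add_comm p x₀, ← sub_sub, this]; abel
        show ⟪x - p - x₀, v⟫ = 0
        rw [hxq, real_inner_comm]
        exact (Submodule.mem_orthogonal K q).mp hq v hv
    · rintro ⟨t, ht, v, hv, rfl⟩
      rw [hT] at ht
      rw [hL] at hv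
      have := hv t ht.1 1
      simpa using this
  -- Part 2
  have part2 : ¬ ∃ (x u : EuclideanSpace ℝ (Fin n)),
      u ≠ 0 ∧ ∀ s : ℝ, x + s • u ∈ T := by
    rintro ⟨x, u, hu, hxu⟩
    have hM' : ∀ s : ℝ, x + s • u ∈ M := fun s => by
      have := hxu s; rw [hT] at this; exact this.1
    have huL : u ∈ L := hline x u hM'
    have h0 := hxu 0
    have h1 := hxu 1
    rw [hT] at h0 h1
    have e0 := h0.2 u huL
    have e1 := h1.2 u huL
    simp only [zero_smul, add_zero, one_smul, Set.mem_setOf_eq] at e0 e1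
    have heq : x + u - x₀ = (x - x₀) + u := by abel
    rw [heq, inner_add_left, e0, zero_add] at e1
    exact hu (inner_self_eq_zero.mp e1)
  refine ⟨part1, part2, ?_⟩
  -- Part 3
  intro hTub
  have hx₀T : x₀ ∈ T := by
    rw [hT]; exact ⟨hx₀M, fun v hv => by simp⟩
  have hTclosed : IsClosed T := by
    rw [hT]
    apply hMclosed.inter
    have hset : {x : EuclideanSpace ℝ (Fin n) | ∀ v ∈ L, ⟪x - x₀, v⟫ = 0}
        = ⋂ v ∈ L, {x | ⟪x - x₀, v⟫ = 0} := by
      ext x; simp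
    rw [hset]
    refine isClosed_biInter fun v hv => isClosed_eq ?_ continuous_const
    exact (continuous_id.sub continuous_const).inner continuous_const
  have hTconv : Convex ℝ T := by
    rw [hT]
    apply hMconv.inter
    intro x hx y hy a b ha hb hab
    intro v hv
    have hx' := hx v hv
    have hy' := hy v hv
    have heq : a • x + b • y - x₀ = a • (x - x₀) + b • (y - x₀) := by
      have h : x₀ = a • x₀ + b • x₀ := by rw [← add_smul, hab, one_smul]
      rw [smul_sub, smul_sub]
      nth_rewrite 1 [h]
      abel
    rw [heq, inner_add_left, real_inner_smul_left, real_inner_smul_left, hx', hy']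
    ring
  -- unbounded: produce sequence going to infinity
  have hub : ∀ C : ℝ, ∃ x ∈ T, C < ‖x‖ := by
    intro C; by_contra h; push_neg at h
    exact hTub (isBounded_iff_forall_norm_le.mpr ⟨C, h⟩)
  choose xs hxsT hxs using fun k : ℕ => hub ((k : ℝ) + ‖x₀‖)
  have hd : ∀ k : ℕ, (k:ℝ) < ‖xs k - x₀‖ := fun k => by
    have h1 := hxs k
    have h2 : ‖xs k‖ - ‖x₀‖ ≤ ‖xs k - x₀‖ := norm_sub_norm_le _ _
    linarith
  have hdpos : ∀ k, 0 < ‖xs k - x₀‖ := fun k => lt_of_le_of_lt (Nat.cast_nonneg k) (hd k)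
  set useq : ℕ → EuclideanSpace ℝ (Fin n) :=
    fun k => ‖xs k - x₀‖⁻¹ • (xs k - x₀) with husq
  have huseq1 : ∀ k, ‖useq k‖ = 1 := fun k => by
    rw [husq]
    simp only [norm_smul, norm_inv, norm_norm]
    exact inv_mul_cancel₀ (hdpos k).ne'
  obtain ⟨u, huS, φ, hφ, hconv⟩ := (isCompact_sphere (0 : EuclideanSpace ℝ (Fin n)) 1).tendsto_subseq
      (fun k => by simp [mem_sphere_zero_iff_norm, huseq1 k] :
        ∀ k, useq k ∈ Metric.sphere (0 : EuclideanSpace ℝ (Fin n)) 1)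
  have hu1 : ‖u‖ = 1 := mem_sphere_zero_iff_norm.mp huS
  have hdtop : Filter.Tendsto (fun k : ℕ => ‖xs (φ k) - x₀‖) Filter.atTop Filter.atTop := by
    apply Filter.tendsto_atTop_mono (fun k => (hd (φ k)).le)
    apply Filter.tendsto_atTop_mono (fun k => (Nat.cast_le (α := ℝ)).mpr (hφ.le_apply))
    exact tendsto_natCast_atTop_atTop
  -- the recession cone of T
  set R : Set (EuclideanSpace ℝ (Fin n)) :=
    {v | ∀ x ∈ T, ∀ t : ℝ, 0 ≤ t → x + t • v ∈ T} with hR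
  have huR : u ∈ R := by
    intro x hx t ht
    have hdiv : Filter.Tendsto (fun k : ℕ => t / ‖xs (φ k) - x₀‖) Filter.atTop (nhds 0) :=
      tendsto_const_nhds.div_atTop hdtop
    set z : ℕ → EuclideanSpace ℝ (Fin n) :=
      fun k => x + (t / ‖xs (φ k) - x₀‖) • (xs (φ k) - x) with hz
    have hzT : ∀ᶠ k in Filter.atTop, z k ∈ T := by
      filter_upwards [Filter.eventually_atTop.mpr ⟨⌈t⌉₊, fun k hk => hk⟩] with k hk
      have htle : t ≤ ‖xs (φ k) - x₀‖ := by
        calc t ≤ (⌈t⌉₊ : ℝ) := Nat.le_ceil t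
          _ ≤ (k : ℝ) := by exact_mod_cast hk
          _ ≤ (φ k : ℝ) := by exact_mod_cast hφ.le_apply
          _ ≤ ‖xs (φ k) - x₀‖ := (hd (φ k)).le
      set θ : ℝ := t / ‖xs (φ k) - x₀‖ with hθ
      have hθ0 : 0 ≤ θ := div_nonneg ht (hdpos _).le
      have hθ1 : θ ≤ 1 := by
        rw [hθ, div_le_one (hdpos _)]; exact htle
      have hmem := hTconv hx (hxsT (φ k)) (by linarith : (0:ℝ) ≤ 1 - θ) hθ0 (by ring)
      have : z k = (1 - θ) • x + θ • xs (φ k) := by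
        rw [hz]; simp only []
        rw [smul_sub, sub_smul, one_smul]; abel
      rw [this]
      exact hmem
    have hzeq : ∀ k, z k = x + t • useq (φ k)
        + (t * ‖xs (φ k) - x₀‖⁻¹) • (x₀ - x) := by
      intro k
      rw [hz, husq]
      simp only []
      rw [smul_smul, div_eq_mul_inv]
      module
    have hztend : Filter.Tendsto z Filter.atTop (nhds (x + t • u)) := by
      have h1 : Filter.Tendsto (fun k => t • useq (φ k)) Filter.atTop (nhds (t • u)) :=
        hconv.const_smul t
      have h2 : Filter.Tendsto (fun k : ℕ => (t * ‖xs (φ k) - x₀‖⁻¹) •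
          (x₀ - x)) Filter.atTop (nhds 0) := by
        have h3 : Filter.Tendsto (fun k : ℕ => t * ‖xs (φ k) - x₀‖⁻¹)
            Filter.atTop (nhds 0) := by
          have := hdtop.inv_tendsto_atTop
          have h4 := this.const_mul t
          simpa using h4
        have := h3.smul_const (x₀ - x)
        simpa using this
      have := (tendsto_const_nhds (x := x) (f := Filter.atTop)).add (h1.add h2)
      simp only [add_zero] at this
      rw [Filter.tendsto_congr hzeq]
      convert this using 2
      abel
    exact hTclosed.mem_of_tendsto hztend hzT
  have hurec : IsRecessionDirection T u := ⟨hu1, huR⟩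
  -- recession cone is a closed convex cone
  have h0R : (0 : EuclideanSpace ℝ (Fin n)) ∈ R := by
    intro x hx t ht; simpa using hx
  let Rcone : ConvexCone ℝ (EuclideanSpace ℝ (Fin n)) :=
    { carrier := R
      smul_mem' := by
        intro c hc v hv x hx t ht
        rw [smul_smul]
        exact hv x hx (t * c) (mul_nonneg ht hc.le)
      add_mem' := by
        intro v hv w hw x hx t ht
        have h1 := hv x hx t ht
        have h2 := hw (x + t • v) h1 t ht
        rw [smul_add, ← add_assoc]
        exact h2 }
  have hRclosed : IsClosed R := by
    have hset : R = ⋂ x ∈ T, ⋂ t ∈ Set.Ici (0:ℝ),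
        {v : EuclideanSpace ℝ (Fin n) | x + t • v ∈ T} := by
      ext v; simp [hR]
    rw [hset]
    refine isClosed_biInter fun x hx => isClosed_biInter fun t ht => ?_
    have : {v : EuclideanSpace ℝ (Fin n) | x + t • v ∈ T}
        = (fun v : EuclideanSpace ℝ (Fin n) => x + t • v) ⁻¹' T := rfl
    rw [this]
    exact IsClosed.preimage (continuous_const.add (continuous_id.const_smul t)) hTclosed
  -- bipolar theorem
  let Rp : ProperCone ℝ (EuclideanSpace ℝ (Fin n)) :=
    { toSubmodule :=
        { carrier := R
          add_mem' := fun hv hw => Rcone.add_mem' hv hw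
          zero_mem' := h0R
          smul_mem' := by
            intro c v hv x hx t ht
            show x + t • ((c : ℝ) • v) ∈ T
            rw [smul_smul]
            exact hv x hx (t * (c : ℝ)) (mul_nonneg ht c.2) }
      isClosed' := hRclosed }
  have hbipolar : ((ProperCone.innerDual
      ((ProperCone.innerDual (Rcone : Set (EuclideanSpace ℝ (Fin n))) :
        Set (EuclideanSpace ℝ (Fin n))))) : Set (EuclideanSpace ℝ (Fin n))) = R :=
    congrArg SetLike.coe (ProperCone.innerDual_innerDual Rp)
  set D : Set (EuclideanSpace ℝ (Fin n)) :=
    ((ProperCone.innerDual (Rcone : Set (EuclideanSpace ℝ (Fin n)))) :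
      Set (EuclideanSpace ℝ (Fin n))) with hD
  have hDconv : Convex ℝ D := by
    intro x hx y hy a b ha hb hab
    rw [hD, SetLike.mem_coe, ProperCone.mem_innerDual] at hx hy ⊢
    intro z hz
    rw [inner_add_right, real_inner_smul_right, real_inner_smul_right]
    exact add_nonneg (mul_nonneg ha (hx hz)) (mul_nonneg hb (hy hz))
  have h0D : (0 : EuclideanSpace ℝ (Fin n)) ∈ D := by
    rw [hD, SetLike.mem_coe, ProperCone.mem_innerDual]
    intro x hx
    rw [inner_zero_right]
  -- the dual cone spans the whole space
  have hspanD : Submodule.span ℝ D = ⊤ := by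
    by_contra hne
    have hobot : (Submodule.span ℝ D)ᗮ ≠ ⊥ := by
      intro h
      exact hne (Submodule.orthogonal_eq_bot_iff.mp h)
    obtain ⟨v, hv, hv0⟩ := Submodule.exists_mem_ne_zero_of_ne_bot hobot
    have hvD : ∀ d ∈ D, ⟪d, v⟫ = 0 := fun d hd =>
      (Submodule.mem_orthogonal _ v).mp hv d (Submodule.subset_span hd)
    have hvR : v ∈ R := by
      have hvdual : v ∈ (ProperCone.innerDual D : Set (EuclideanSpace ℝ (Fin n))) := by
        rw [SetLike.mem_coe, ProperCone.mem_innerDual]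
        exact fun x hx => le_of_eq (hvD x hx).symm
      rw [hD, hbipolar] at hvdual
      exact hvdual
    have hmvR : -v ∈ R := by
      have hvdual : -v ∈ (ProperCone.innerDual D : Set (EuclideanSpace ℝ (Fin n))) := by
        rw [SetLike.mem_coe, ProperCone.mem_innerDual]
        intro x hx
        rw [inner_neg_right, hvD x hx, neg_zero]
      rw [hD, hbipolar] at hvdual
      exact hvdual
    refine part2 ⟨x₀, v, hv0, fun s => ?_⟩
    rcases le_or_gt 0 s with hs | hs
    · exact hvR x₀ hx₀T s hs
    · have := hmvR x₀ hx₀T (-s) (by linarith)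
      simpa using this
  -- hence its interior is nonempty
  have hDne : D.Nonempty := ⟨0, h0D⟩
  have haff : affineSpan ℝ D = ⊤ := by
    rw [AffineSubspace.affineSpan_eq_top_iff_vectorSpan_eq_top_of_nonempty ℝ
      (EuclideanSpace ℝ (Fin n)) (EuclideanSpace ℝ (Fin n)) hDne]
    rw [eq_top_iff, ← hspanD]
    rw [Submodule.span_le]
    intro d hd
    have := vsub_mem_vectorSpan ℝ hd h0D
    simpa using this
  obtain ⟨w₀, hw₀⟩ := (hDconv.interior_nonempty_iff_affineSpan_eq_top).mpr haff
  obtain ⟨δ, hδpos, hball⟩ := Metric.isOpen_iff.mp isOpen_interior w₀ hw₀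
  have hkey : ∀ u' : EuclideanSpace ℝ (Fin n), u' ∈ R → ‖u'‖ = 1 → δ/2 ≤ ⟪u', w₀⟫ := by
    intro u' hu' hn
    have hmemball : w₀ - (δ/2) • u' ∈ Metric.ball w₀ δ := by
      rw [Metric.mem_ball, dist_eq_norm]
      have : w₀ - (δ/2) • u' - w₀ = -((δ/2) • u') := by abel
      rw [this, norm_neg, norm_smul, hn, mul_one, Real.norm_eq_abs,
        abs_of_nonneg (by linarith : (0:ℝ) ≤ δ/2)]
      linarith
    have hmem : w₀ - (δ/2) • u' ∈ D := interior_subset (hball hmemball)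
    have hineq : 0 ≤ ⟪u', w₀ - (δ/2) • u'⟫ := hmem hu'
    rw [inner_sub_right, real_inner_smul_right, real_inner_self_eq_norm_sq, hn] at hineq
    nlinarith
  have hw₀u : δ/2 ≤ ⟪u, w₀⟫ := hkey u huR hu1
  have hw₀ne : w₀ ≠ 0 := by
    intro h
    rw [h, inner_zero_right] at hw₀u
    linarith
  have hw₀pos : 0 < ‖w₀‖ := norm_pos_iff.mpr hw₀ne
  refine ⟨⟨u, hurec⟩, ‖w₀‖⁻¹ • w₀, (δ/2) * ‖w₀‖⁻¹, ?_, ?_, ?_⟩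
  · rw [norm_smul, norm_inv, norm_norm]
    exact inv_mul_cancel₀ hw₀pos.ne'
  · exact mul_pos (by linarith) (inv_pos.mpr hw₀pos)
  · intro u' hu'
    obtain ⟨hn', hmem'⟩ := hu'
    have h1 : δ/2 ≤ ⟪u', w₀⟫ := hkey u' hmem' hn'
    rw [real_inner_smul_right, mul_comm (δ/2) ‖w₀‖⁻¹]
    exact mul_le_mul_of_nonneg_left h1 (inv_nonneg.mpr (norm_nonneg w₀))
end

section
/- Let C be a nonempty closed spherically convex subset of the unit sphere S of ℝⁿ. Then there exist linear subspaces V₁, V₂ of ℝⁿ with V₁ orthogonal to V₂ such that, writing S₁ = S ∩ V₁ and C₂ = C ∩ V₂: (a) S₁ ⊆ C and every subsphere of S contained in C is contained in S₁; (b) C = S₁ ∪ C₂ ∪ {cos(α)·s + sin(α)·c : s ∈ S₁, c ∈ C₂, α ∈ (0, π/2)}; (c) either C₂ = ∅ (and then C = S₁) or C₂ is a nonempty closed spherically convex set for which there exists c₀ ∈ C₂ with sup_{c∈C₂} d(c₀,c) < π/2. -/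
open scoped RealInnerProductSpace

/-- The unit sphere of `ℝⁿ`. -/
def unitSphere (n : ℕ) : Set (EuclideanSpace ℝ (Fin n)) := {x | ‖x‖ = 1}

/-- The angular metric on the unit sphere. -/
noncomputable def sdist {n : ℕ} (x y : EuclideanSpace ℝ (Fin n)) : ℝ :=
  Real.arccos ⟪x, y⟫

/-- A subset of the unit sphere is spherically convex if for all non-antipodal
distinct points `x, y` of it, the minimizing geodesic from `x` to `y` is
contained in it. -/
def SphConvex {n : ℕ} (C : Set (EuclideanSpace ℝ (Fin n))) : Prop :=
  ∀ x ∈ C, ∀ y ∈ C, x ≠ y → x ≠ -y → ∀ t ∈ Set.Icc (0 : ℝ) 1,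
    (Real.sin ((1 - t) * sdist x y) / Real.sin (sdist x y)) • x +
      (Real.sin (t * sdist x y) / Real.sin (sdist x y)) • y ∈ C

/-- The cone over a set. -/
def coneOf {n : ℕ} (C : Set (EuclideanSpace ℝ (Fin n))) : Set (EuclideanSpace ℝ (Fin n)) :=
  {x | ∃ r : ℝ, 0 ≤ r ∧ ∃ c ∈ C, x = r • c}

namespace SphAux

variable {n : ℕ} {C : Set (EuclideanSpace ℝ (Fin n))}

theorem mem_cone_self {c : EuclideanSpace ℝ (Fin n)} (hc : c ∈ C) : c ∈ coneOf C :=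
  ⟨1, zero_le_one, c, hc, (one_smul _ _).symm⟩

theorem cone_smul {r : ℝ} (hr : 0 ≤ r) {x : EuclideanSpace ℝ (Fin n)} (hx : x ∈ coneOf C) :
    r • x ∈ coneOf C := by
  obtain ⟨a, ha, c, hc, rfl⟩ := hx
  exact ⟨r * a, mul_nonneg hr ha, c, hc, smul_smul r a c⟩

theorem cone_zero (hne : C.Nonempty) : (0 : EuclideanSpace ℝ (Fin n)) ∈ coneOf C := by
  obtain ⟨c, hc⟩ := hne
  exact ⟨0, le_refl _, c, hc, (zero_smul ℝ c).symm⟩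

theorem cone_mem_of_norm_one (hsub : C ⊆ unitSphere n) {x : EuclideanSpace ℝ (Fin n)}
    (hx : x ∈ coneOf C) (hx1 : ‖x‖ = 1) : x ∈ C := by
  obtain ⟨r, hr, c, hc, rfl⟩ := hx
  have hc1 : ‖c‖ = 1 := hsub hc
  have : ‖r • c‖ = r := by rw [norm_smul, hc1, mul_one, Real.norm_eq_abs, abs_of_nonneg hr]
  rw [this] at hx1
  rw [hx1, one_smul]
  exact hc

theorem add_mem_cone_core (hsub : C ⊆ unitSphere n) (hconv : SphConvex C)
    {c d : EuclideanSpace ℝ (Fin n)} (hc : c ∈ C) (hd : d ∈ C) (hcd : c ≠ d) (hcnd : c ≠ -d)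
    {r s : ℝ} (hr : 0 < r) (hs : 0 < s) : r • c + s • d ∈ coneOf C := by
  have hc1 : ‖c‖ = 1 := hsub hc
  have hd1 : ‖d‖ = 1 := hsub hd
  have hip_le : ⟪c, d⟫ ≤ 1 := by
    have := real_inner_le_norm c d
    rw [hc1, hd1] at this; linarith
  have hip_ge : -1 ≤ ⟪c, d⟫ := by
    have := real_inner_le_norm c (-d)
    rw [hc1, norm_neg, hd1, inner_neg_right] at this; linarith
  have hip_lt : ⟪c, d⟫ < 1 := by
    rcases lt_or_eq_of_le hip_le with h | h
    · exact h
    · exfalso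
      have h2 : ‖c - d‖ ^ 2 = 0 := by
        rw [norm_sub_sq_real, hc1, hd1, h]; ring
      exact hcd (sub_eq_zero.mp (by
        have := pow_eq_zero_iff (n := 2) (two_ne_zero) |>.mp h2
        exact norm_eq_zero.mp this))
  have hip_gt : -1 < ⟪c, d⟫ := by
    rcases lt_or_eq_of_le hip_ge with h | h
    · exact h
    · exfalso
      have h2 : ‖c + d‖ ^ 2 = 0 := by
        rw [norm_add_sq_real, hc1, hd1, ← h]; ring
      have : c + d = 0 := norm_eq_zero.mp (pow_eq_zero_iff (n := 2) two_ne_zero |>.mp h2)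
      exact hcnd (by rw [← sub_eq_zero]; simpa [sub_neg_eq_add] using this)
  set θ := Real.arccos ⟪c, d⟫ with hθdef
  have hθ0 : 0 < θ := Real.arccos_pos.2 hip_lt
  have hθπ : θ < Real.pi := lt_of_le_of_ne (Real.arccos_le_pi _)
    (fun h => absurd (Real.arccos_eq_pi.mp h) (by linarith))
  have hsθ : 0 < Real.sin θ := Real.sin_pos_of_pos_of_lt_pi hθ0 hθπ
  set f : ℝ → ℝ := fun t => s * Real.sin ((1 - t) * θ) - r * Real.sin (t * θ) with hfdef
  have hfc : Continuous f := by fun_prop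
  have hf0 : 0 < f 0 := by simp [hfdef]; positivity
  have hf1 : f 1 < 0 := by
    simp only [hfdef, sub_self, zero_mul, Real.sin_zero, mul_zero, one_mul, zero_sub, neg_neg]
    simpa using mul_pos hr hsθ
  have hmem : (0 : ℝ) ∈ Set.Icc (f 1) (f 0) := ⟨hf1.le, hf0.le⟩
  obtain ⟨t, htI, htf⟩ := intermediate_value_Icc' (by norm_num : (0:ℝ) ≤ 1)
    hfc.continuousOn hmem
  have ht0 : 0 < t := by
    rcases lt_or_eq_of_le htI.1 with h | h
    · exact h
    · exfalso; rw [← h] at htf; exact hf0.ne (htf.symm ▸ rfl)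
  have ht1 : t < 1 := by
    rcases lt_or_eq_of_le htI.2 with h | h
    · exact h
    · exfalso; rw [h] at htf; exact hf1.ne htf
  have hstθ : 0 < Real.sin (t * θ) :=
    Real.sin_pos_of_pos_of_lt_pi (mul_pos ht0 hθ0)
      (lt_trans (by nlinarith) hθπ)
  have hkey : s * Real.sin ((1 - t) * θ) = r * Real.sin (t * θ) := by
    have : f t = 0 := htf
    simp only [hfdef] at this; linarith
  have hgeo := hconv c hc d hd hcd hcnd t ⟨ht0.le, ht1.le⟩
  have hsd : sdist c d = θ := rfl
  rw [hsd] at hgeo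
  set μ := Real.sin (t * θ) / (s * Real.sin θ) with hμdef
  have hμ : 0 < μ := div_pos hstθ (mul_pos hs hsθ)
  refine ⟨μ⁻¹, (inv_nonneg).2 hμ.le, _, hgeo, ?_⟩
  have hA : Real.sin ((1 - t) * θ) / Real.sin θ = μ * r := by
    rw [hμdef]; field_simp; nlinarith [hkey]
  have hB : Real.sin (t * θ) / Real.sin θ = μ * s := by
    rw [hμdef]; field_simp
  rw [hA, hB, ← smul_smul μ r c, ← smul_smul μ s d, ← smul_add, smul_smul,
    inv_mul_cancel₀ hμ.ne', one_smul]

theorem cone_add (hne : C.Nonempty) (hsub : C ⊆ unitSphere n) (hconv : SphConvex C)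
    {x y : EuclideanSpace ℝ (Fin n)} (hx : x ∈ coneOf C) (hy : y ∈ coneOf C) :
    x + y ∈ coneOf C := by
  obtain ⟨a, ha, c, hc, rfl⟩ := hx
  obtain ⟨b, hb, d, hd, rfl⟩ := hy
  rcases eq_or_lt_of_le ha with ha0 | ha
  · rw [← ha0, zero_smul, zero_add]; exact ⟨b, hb, d, hd, rfl⟩
  rcases eq_or_lt_of_le hb with hb0 | hb
  · rw [← hb0, zero_smul, add_zero]; exact ⟨a, ha.le, c, hc, rfl⟩
  by_cases hcd : c = d
  · subst hcd
    rw [← add_smul]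
    exact ⟨a + b, by positivity, c, hc, rfl⟩
  by_cases hcnd : c = -d
  · subst hcnd
    have : a • (-d) + b • d = (b - a) • d := by
      rw [smul_neg, sub_smul]; abel
    rw [this]
    rcases le_total a b with hab | hab
    · exact ⟨b - a, by linarith, d, hd, rfl⟩
    · have : (b - a) • d = (a - b) • (-d) := by
        rw [smul_neg, ← neg_smul]; ring_nf
      rw [this]
      exact ⟨a - b, by linarith, -d, hc, rfl⟩
  · exact add_mem_cone_core hsub hconv hc hd hcd hcnd ha hb


theorem isCompact_convexHull_eucl {n : ℕ} {s : Set (EuclideanSpace ℝ (Fin n))}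
    (hs : IsCompact s) : IsCompact (convexHull ℝ s) := by
  classical
  rcases s.eq_empty_or_nonempty with rfl | ⟨c0, hc0⟩
  · simp
  set N := n + 1 with hN
  set φ : (Fin N → ℝ) × (Fin N → EuclideanSpace ℝ (Fin n)) → EuclideanSpace ℝ (Fin n) :=
    fun p => ∑ i, p.1 i • p.2 i with hφdef
  have hφ : Continuous φ := by
    apply continuous_finset_sum
    intro i _
    exact ((continuous_apply i).comp continuous_fst).smul
      ((continuous_apply i).comp continuous_snd)
  set D : Set ((Fin N → ℝ) × (Fin N → EuclideanSpace ℝ (Fin n))) :=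
    (stdSimplex ℝ (Fin N)) ×ˢ (Set.univ.pi fun _ => s) with hD
  have hDcomp : IsCompact D :=
    IsCompact.prod (isCompact_stdSimplex (𝕜 := ℝ) (ι := Fin N)) (isCompact_univ_pi fun _ => hs)
  have himg : convexHull ℝ s = φ '' D := by
    apply Set.Subset.antisymm
    · intro x hx
      obtain ⟨ι, hfin, z, w, hzs, hai, hw, hw1, hsum⟩ :=
        eq_pos_convex_span_of_mem_convexHull hx
      have hcard : Fintype.card ι ≤ N := by
        have h1 := hai.card_le_finrank_succ
        have h2 : Module.finrank ℝ (vectorSpan ℝ (Set.range z)) ≤ n := by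
          have := Submodule.finrank_le (vectorSpan ℝ (Set.range z))
          simpa [finrank_euclideanSpace_fin] using this
        omega
      obtain ⟨e⟩ : Nonempty (ι ↪ Fin N) :=
        Function.Embedding.nonempty_of_card_le (by simpa using hcard)
      set w' : Fin N → ℝ := fun j => ∑ i : ι, if e i = j then w i else 0 with hw'
      set z' : Fin N → EuclideanSpace ℝ (Fin n) :=
        fun j => if h : ∃ i, e i = j then z h.choose else c0 with hz'
      have hz'e : ∀ i, z' (e i) = z i := by
        intro i
        have h : ∃ i', e i' = e i := ⟨i, rfl⟩
        have : h.choose = i := e.injective h.choose_spec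
        simp only [hz', dif_pos h, this]
      have hw'e : ∀ i, w' (e i) = w i := by
        intro i
        show (∑ i' : ι, if e i' = e i then w i' else 0) = w i
        rw [Finset.sum_eq_single i]
        · simp
        · intro j _ hj
          rw [if_neg (fun h => hj (e.injective h))]
        · simp
      have hw'0 : ∀ j, 0 ≤ w' j := by
        intro j
        apply Finset.sum_nonneg
        intro i _
        split <;> [exact (hw i).le; rfl]
      have hw'1 : ∑ j, w' j = 1 := by
        simp only [hw']
        rw [Finset.sum_comm]
        rw [← hw1]
        apply Finset.sum_congr rfl
        intro i _
        simp
      have hz's : ∀ j, z' j ∈ s := by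
        intro j
        show (if h : ∃ i, e i = j then z h.choose else c0) ∈ s
        split
        · exact hzs ⟨_, rfl⟩
        · exact hc0
      refine ⟨(w', z'), ⟨⟨hw'0, hw'1⟩, fun j _ => hz's j⟩, ?_⟩
      rw [hφdef]
      show ∑ j, w' j • z' j = x
      rw [← hsum]
      have : ∀ j, w' j • z' j = ∑ i : ι, if e i = j then w i • z' j else 0 := by
        intro j
        show (∑ i : ι, if e i = j then w i else 0) • z' j = _
        rw [Finset.sum_smul]
        apply Finset.sum_congr rfl
        intro i _
        split <;> simp
      rw [Finset.sum_congr rfl fun j _ => this j, Finset.sum_comm]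
      apply Finset.sum_congr rfl
      intro i _
      rw [Finset.sum_ite_eq Finset.univ (e i) (fun j => w i • z' j)]
      simp [hz'e i]
    · rintro x ⟨⟨w, z⟩, ⟨⟨hw0, hw1⟩, hz⟩, rfl⟩
      have := Finset.centerMass_mem_convexHull (Finset.univ : Finset (Fin N))
        (fun i _ => hw0 i) (by rw [hw1]; norm_num)
        (fun i _ => hz i (Set.mem_univ i))
      rwa [Finset.centerMass_eq_of_sum_1 _ _ hw1] at this
  rw [himg]
  exact hDcomp.image hφ

end SphAux

theorem stmt4 {n : ℕ} (C : Set (EuclideanSpace ℝ (Fin n)))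
    (hne : C.Nonempty) (hcl : IsClosed C) (hsub : C ⊆ unitSphere n)
    (hconv : SphConvex C) :
    ∃ V₁ V₂ : Submodule ℝ (EuclideanSpace ℝ (Fin n)),
      (∀ v ∈ V₁, ∀ w ∈ V₂, ⟪v, w⟫ = 0) ∧
      -- (a) `S₁ = S ∩ V₁` is contained in `C` and contains every subsphere of `S`
      -- contained in `C`
      (unitSphere n ∩ V₁ ⊆ C) ∧
      (∀ V : Submodule ℝ (EuclideanSpace ℝ (Fin n)), V ≠ ⊥ →
        unitSphere n ∩ V ⊆ C → unitSphere n ∩ V ⊆ unitSphere n ∩ V₁) ∧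
      -- (b) `C` is the spherical join of `S₁` and `C₂ = C ∩ V₂`
      C = (unitSphere n ∩ V₁) ∪ (C ∩ V₂) ∪
        {p | ∃ s ∈ unitSphere n ∩ (V₁ : Set (EuclideanSpace ℝ (Fin n))),
          ∃ c ∈ C ∩ (V₂ : Set (EuclideanSpace ℝ (Fin n))),
          ∃ α ∈ Set.Ioo (0 : ℝ) (Real.pi / 2),
            p = Real.cos α • s + Real.sin α • c} ∧
      -- (c) either `C₂` is empty and `C = S₁`, or `C₂` is a nonempty closed
      -- spherically convex set of intrinsic radius `< π/2`
      ((C ∩ (V₂ : Set (EuclideanSpace ℝ (Fin n))) = ∅ ∧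
          C = unitSphere n ∩ V₁) ∨
        ((C ∩ (V₂ : Set (EuclideanSpace ℝ (Fin n)))).Nonempty ∧
          IsClosed (C ∩ (V₂ : Set (EuclideanSpace ℝ (Fin n)))) ∧
          SphConvex (C ∩ (V₂ : Set (EuclideanSpace ℝ (Fin n)))) ∧
          ∃ c₀ ∈ C ∩ (V₂ : Set (EuclideanSpace ℝ (Fin n))), ∃ r : ℝ,
            r < Real.pi / 2 ∧
            ∀ c ∈ C ∩ (V₂ : Set (EuclideanSpace ℝ (Fin n))), sdist c₀ c ≤ r)) := by
  classical
  set K := coneOf C with hKdef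
  have Kadd : ∀ {x y}, x ∈ K → y ∈ K → x + y ∈ K :=
    fun hx hy => SphAux.cone_add hne hsub hconv hx hy
  have Ksmul : ∀ {r : ℝ}, 0 ≤ r → ∀ {x}, x ∈ K → r • x ∈ K :=
    fun hr _ hx => SphAux.cone_smul hr hx
  have Kself : ∀ {c}, c ∈ C → c ∈ K := fun hc => SphAux.mem_cone_self hc
  have Ksph : ∀ {x}, x ∈ K → ‖x‖ = 1 → x ∈ C :=
    fun hx h1 => SphAux.cone_mem_of_norm_one hsub hx h1
  have Kzero : (0 : EuclideanSpace ℝ (Fin n)) ∈ K := SphAux.cone_zero hne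
  let V₁ : Submodule ℝ (EuclideanSpace ℝ (Fin n)) :=
    { carrier := {x | x ∈ K ∧ -x ∈ K}
      add_mem' := fun ha hb => ⟨Kadd ha.1 hb.1, by rw [neg_add]; exact Kadd ha.2 hb.2⟩
      zero_mem' := ⟨Kzero, by simpa using Kzero⟩
      smul_mem' := by
        intro r x hx
        rcases le_total 0 r with hr | hr
        · exact ⟨Ksmul hr hx.1, by rw [← smul_neg]; exact Ksmul hr hx.2⟩
        · constructor
          · have h : r • x = (-r) • (-x) := by simp
            rw [h]; exact Ksmul (by linarith) hx.2
          · have h : -(r • x) = (-r) • x := by simp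
            rw [h]; exact Ksmul (by linarith) hx.1 }
  have hV₁ : ∀ x, x ∈ V₁ ↔ x ∈ K ∧ -x ∈ K := fun x => Iff.rfl
  refine ⟨V₁, V₁ᗮ, ?_, ?_, ?_, ?_, ?_⟩
  · exact fun v hv w hw => Submodule.inner_right_of_mem_orthogonal hv hw
  · rintro x ⟨hxS, hxV⟩
    exact Ksph hxV.1 hxS
  · rintro V - hVC x ⟨hxS, hxV⟩
    refine ⟨hxS, Kself (hVC ⟨hxS, hxV⟩), Kself (hVC ⟨?_, V.neg_mem hxV⟩)⟩
    show ‖-x‖ = 1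
    rw [norm_neg]; exact hxS
  · apply Set.Subset.antisymm
    · intro c hc
      obtain ⟨v, hv, w, hw, hdec⟩ := V₁.exists_add_mem_mem_orthogonal c
      have hcK : c ∈ K := Kself hc
      have hwK : w ∈ K := by
        have h1 : c + -v ∈ K := Kadd hcK hv.2
        have h2 : c + -v = w := by rw [hdec]; abel
        rwa [h2] at h1
      have hvw : ⟪v, w⟫ = 0 := Submodule.inner_right_of_mem_orthogonal hv hw
      have hcn : ‖c‖ = 1 := hsub hc
      have hpyth : ‖v‖ ^ 2 + ‖w‖ ^ 2 = 1 := by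
        have h3 := norm_add_sq_real v w
        rw [← hdec, hcn, hvw] at h3
        nlinarith [h3]
      by_cases hw0 : w = 0
      · left; left
        refine ⟨hsub hc, ?_⟩
        have h : c = v := by rw [hdec, hw0, add_zero]
        rw [h]; exact hv
      by_cases hv0 : v = 0
      · left; right
        refine ⟨hc, ?_⟩
        have h : c = w := by rw [hdec, hv0, zero_add]
        rw [h]; exact hw
      · right
        have hvpos : 0 < ‖v‖ := norm_pos_iff.2 hv0
        have hwpos : 0 < ‖w‖ := norm_pos_iff.2 hw0
        have hwlt : ‖w‖ < 1 := by nlinarith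
        refine ⟨‖v‖⁻¹ • v, ⟨?_, V₁.smul_mem _ hv⟩, ‖w‖⁻¹ • w, ⟨?_, Submodule.smul_mem _ _ hw⟩,
          Real.arcsin ‖w‖, ⟨Real.arcsin_pos.2 hwpos, Real.arcsin_lt_pi_div_two.2 hwlt⟩, ?_⟩
        · show ‖‖v‖⁻¹ • v‖ = 1
          rw [norm_smul, Real.norm_eq_abs, abs_of_nonneg (by positivity),
            inv_mul_cancel₀ hvpos.ne']
        · apply Ksph (Ksmul (by positivity) hwK)
          rw [norm_smul, Real.norm_eq_abs, abs_of_nonneg (by positivity),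
            inv_mul_cancel₀ hwpos.ne']
        · rw [Real.sin_arcsin (by linarith) hwlt.le, Real.cos_arcsin]
          have h1 : 1 - ‖w‖ ^ 2 = ‖v‖ ^ 2 := by linarith
          rw [h1, Real.sqrt_sq hvpos.le, smul_smul, smul_smul,
            mul_inv_cancel₀ hvpos.ne', mul_inv_cancel₀ hwpos.ne', one_smul, one_smul, hdec]
    · intro p hp
      rcases hp with (hp | hp) | hp
      · exact Ksph hp.2.1 hp.1
      · exact hp.1
      · obtain ⟨s, hs, c, hc, α, hα, rfl⟩ := hp
        have hcosp : 0 < Real.cos α :=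
          Real.cos_pos_of_mem_Ioo ⟨by linarith [hα.1, Real.pi_pos], hα.2⟩
        have hsinp : 0 < Real.sin α :=
          Real.sin_pos_of_pos_of_lt_pi hα.1 (by linarith [Real.pi_pos, hα.2])
        have hsK : s ∈ K := hs.2.1
        have hcK : c ∈ K := Kself hc.1
        have hmem : Real.cos α • s + Real.sin α • c ∈ K :=
          Kadd (Ksmul hcosp.le hsK) (Ksmul hsinp.le hcK)
        apply Ksph hmem
        have hsc : ⟪s, c⟫ = 0 := Submodule.inner_right_of_mem_orthogonal hs.2 hc.2
        have hs1 : ‖s‖ = 1 := hs.1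
        have hc1 : ‖c‖ = 1 := hsub hc.1
        have hn2 : ‖Real.cos α • s + Real.sin α • c‖ ^ 2 = 1 := by
          rw [norm_add_sq_real, real_inner_smul_left, real_inner_smul_right, hsc,
            norm_smul, norm_smul, hs1, hc1, Real.norm_eq_abs, Real.norm_eq_abs,
            abs_of_nonneg hcosp.le, abs_of_nonneg hsinp.le]
          nlinarith [Real.sin_sq_add_cos_sq α]
        nlinarith [norm_nonneg (Real.cos α • s + Real.sin α • c), hn2]
  · by_cases hC2e : C ∩ (V₁ᗮ : Set (EuclideanSpace ℝ (Fin n))) = ∅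
    · left
      refine ⟨hC2e, Set.Subset.antisymm ?_ ?_⟩
      · intro c hc
        obtain ⟨v, hv, w, hw, hdec⟩ := V₁.exists_add_mem_mem_orthogonal c
        have hwK : w ∈ K := by
          have h1 : c + -v ∈ K := Kadd (Kself hc) hv.2
          have h2 : c + -v = w := by rw [hdec]; abel
          rwa [h2] at h1
        have hw0 : w = 0 := by
          by_contra hw0
          have hwpos : 0 < ‖w‖ := norm_pos_iff.2 hw0
          have hmem : ‖w‖⁻¹ • w ∈ C ∩ (V₁ᗮ : Set (EuclideanSpace ℝ (Fin n))) := by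
            refine ⟨Ksph (Ksmul (by positivity) hwK) ?_, Submodule.smul_mem _ _ hw⟩
            rw [norm_smul, Real.norm_eq_abs, abs_of_nonneg (by positivity),
              inv_mul_cancel₀ hwpos.ne']
          rw [hC2e] at hmem; exact hmem
        refine ⟨hsub hc, ?_⟩
        have h : c = v := by rw [hdec, hw0, add_zero]
        rw [h]; exact hv
      · rintro x ⟨hxS, hxV⟩
        exact Ksph hxV.1 hxS
    · right
      have hC₂ne : (C ∩ (V₁ᗮ : Set (EuclideanSpace ℝ (Fin n)))).Nonempty :=
        Set.nonempty_iff_ne_empty.2 hC2e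
      have hcls : IsClosed (C ∩ (V₁ᗮ : Set (EuclideanSpace ℝ (Fin n)))) :=
        hcl.inter (Submodule.closed_of_finiteDimensional _)
      refine ⟨hC₂ne, hcls, ?_, ?_⟩
      · intro x hx y hy hxy hxny t ht
        exact ⟨hconv x hx.1 y hy.1 hxy hxny t ht,
          Submodule.add_mem _ (Submodule.smul_mem _ _ hx.2) (Submodule.smul_mem _ _ hy.2)⟩
      · set C₂ := C ∩ (V₁ᗮ : Set (EuclideanSpace ℝ (Fin n))) with hC₂def
        have hbd : Bornology.IsBounded C₂ := by
          apply (Metric.isBounded_closedBall (x := (0 : EuclideanSpace ℝ (Fin n))) (r := 1)).subset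
          intro x hx
          rw [Metric.mem_closedBall, dist_zero_right]
          exact le_of_eq (hsub hx.1)
        have hC₂comp : IsCompact C₂ := Metric.isCompact_of_isClosed_isBounded hcls hbd
        set B := convexHull ℝ C₂ with hBdef
        have hBcomp : IsCompact B := SphAux.isCompact_convexHull_eucl hC₂comp
        have hBne : B.Nonempty := hC₂ne.mono (subset_convexHull ℝ C₂)
        have hconvKV : Convex ℝ {x : EuclideanSpace ℝ (Fin n) | x ∈ K ∧ x ∈ V₁ᗮ} := by
          intro x hx y hy a b ha hb hab
          exact ⟨Kadd (Ksmul ha hx.1) (Ksmul hb hy.1),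
            Submodule.add_mem _ (Submodule.smul_mem _ _ hx.2) (Submodule.smul_mem _ _ hy.2)⟩
        have hBsub : B ⊆ {x : EuclideanSpace ℝ (Fin n) | x ∈ K ∧ x ∈ V₁ᗮ} :=
          convexHull_min (fun x hx => ⟨Kself hx.1, hx.2⟩) hconvKV
        obtain ⟨b, hbB, hbmin⟩ := hBcomp.exists_isMinOn hBne continuous_norm.continuousOn
        have hbmin' : ∀ y ∈ B, ‖b‖ ≤ ‖y‖ := fun y hy => hbmin hy
        have hb0 : b ≠ 0 := by
          intro h0
          have h0B : (0 : EuclideanSpace ℝ (Fin n)) ∈ B := h0 ▸ hbB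
          rw [hBdef, convexHull_eq] at h0B
          obtain ⟨ι, t, w, z, hw0, hw1, hzC, hcm⟩ := h0B
          have hsum : ∑ i ∈ t, w i • z i = 0 := by
            rw [← Finset.centerMass_eq_of_sum_1 t z hw1]; exact hcm
          obtain ⟨i₀, hi₀t, hi₀⟩ :=
            Finset.exists_ne_zero_of_sum_ne_zero (f := w) (s := t)
              (by rw [hw1]; norm_num)
          have hwi₀ : 0 < w i₀ := lt_of_le_of_ne (hw0 i₀ hi₀t) (Ne.symm hi₀)
          have hP : ∀ i ∈ t.erase i₀, w i • z i ∈
              {x : EuclideanSpace ℝ (Fin n) | x ∈ K ∧ x ∈ V₁ᗮ} := by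
            intro i hi
            have hit := Finset.mem_of_mem_erase hi
            exact ⟨Ksmul (hw0 i hit) (Kself (hzC i hit).1),
              Submodule.smul_mem _ _ (hzC i hit).2⟩
          have hsumP : (∑ i ∈ t.erase i₀, w i • z i) ∈
              {x : EuclideanSpace ℝ (Fin n) | x ∈ K ∧ x ∈ V₁ᗮ} :=
            Finset.sum_induction _ _
              (fun a b ha hb => ⟨Kadd ha.1 hb.1, Submodule.add_mem _ ha.2 hb.2⟩)
              ⟨Kzero, Submodule.zero_mem _⟩ hP
          have hrest : ∑ i ∈ t.erase i₀, w i • z i = -(w i₀ • z i₀) := by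
            have h := Finset.add_sum_erase t (fun i => w i • z i) hi₀t
            rw [hsum] at h
            exact eq_neg_of_add_eq_zero_right h
          have hx₀ : w i₀ • z i₀ ∈ V₁ :=
            ⟨Ksmul hwi₀.le (Kself (hzC i₀ hi₀t).1), by rw [← hrest]; exact hsumP.1⟩
          have hxV₂ : w i₀ • z i₀ ∈ V₁ᗮ := Submodule.smul_mem _ _ (hzC i₀ hi₀t).2
          have h0' : w i₀ • z i₀ = 0 :=
            inner_self_eq_zero.1 (Submodule.inner_right_of_mem_orthogonal hx₀ hxV₂)
          have hz1 : ‖z i₀‖ = 1 := hsub (hzC i₀ hi₀t).1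
          rcases smul_eq_zero.mp h0' with h | h
          · exact hwi₀.ne' h
          · rw [h] at hz1; simp at hz1
        have hbpos : 0 < ‖b‖ := norm_pos_iff.2 hb0
        have hproj : ∀ c ∈ B, ‖b‖ ^ 2 ≤ ⟪b, c⟫ := by
          intro c hcB
          by_contra hlt
          push_neg at hlt
          have hI : ⟪b, c - b⟫ < 0 := by
            rw [inner_sub_right, real_inner_self_eq_norm_sq]; linarith
          have hcb : c - b ≠ 0 := by
            intro h; rw [h, inner_zero_right] at hI; exact lt_irrefl _ hI
          have hD : 0 < ‖c - b‖ ^ 2 := pow_pos (norm_pos_iff.2 hcb) 2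
          set I := ⟪b, c - b⟫ with hIdef
          set Dq := ‖c - b‖ ^ 2 with hDqdef
          set t := min 1 (-I / Dq) with htdef
          have ht0 : 0 < t := lt_min one_pos (div_pos (neg_pos.2 hI) hD)
          have ht1 : t ≤ 1 := min_le_left _ _
          have htD : t * Dq ≤ -I := by
            have h := min_le_right 1 (-I / Dq)
            calc t * Dq ≤ -I / Dq * Dq := mul_le_mul_of_nonneg_right h hD.le
              _ = -I := by field_simp
          have hmem : b + t • (c - b) ∈ B :=
            (convex_convexHull ℝ C₂).add_smul_sub_mem hbB hcB ⟨ht0.le, ht1⟩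
          have hnorm := hbmin' _ hmem
          have hsq : ‖b‖ ^ 2 ≤ ‖b + t • (c - b)‖ ^ 2 := by
            nlinarith [norm_nonneg b, hnorm]
          have hexp : ‖b + t • (c - b)‖ ^ 2 = ‖b‖ ^ 2 + 2 * (t * I) + t ^ 2 * Dq := by
            rw [norm_add_sq_real, real_inner_smul_right, norm_smul, Real.norm_eq_abs,
              mul_pow, sq_abs]
            try ring
          nlinarith [hsq, hexp, htD, ht0, hI]
        have hbKV := hBsub hbB
        refine ⟨‖b‖⁻¹ • b,
          ⟨Ksph (Ksmul (by positivity) hbKV.1) ?_, Submodule.smul_mem _ _ hbKV.2⟩,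
          Real.arccos ‖b‖, Real.arccos_lt_pi_div_two.2 hbpos, ?_⟩
        · rw [norm_smul, Real.norm_eq_abs, abs_of_nonneg (by positivity),
            inv_mul_cancel₀ hbpos.ne']
        · intro c hcC₂
          have hcB : c ∈ B := subset_convexHull ℝ C₂ hcC₂
          have h1 : ‖b‖ ≤ ⟪‖b‖⁻¹ • b, c⟫ := by
            rw [real_inner_smul_left]
            have h2 := hproj c hcB
            have h3 : ‖b‖ * ‖b‖ ≤ ⟪b, c⟫ := by nlinarith [h2]
            calc ‖b‖ = ‖b‖⁻¹ * (‖b‖ * ‖b‖) := by field_simp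
              _ ≤ ‖b‖⁻¹ * ⟪b, c⟫ := mul_le_mul_of_nonneg_left h3 (by positivity)
          show Real.arccos ⟪‖b‖⁻¹ • b, c⟫ ≤ Real.arccos ‖b‖
          rw [Real.arccos_eq_pi_div_two_sub_arcsin, Real.arccos_eq_pi_div_two_sub_arcsin]
          have h4 := Real.monotone_arcsin h1
          linarith
end

section
/- Let C be a nonempty closed spherically convex subset of the unit sphere S of ℝⁿ, and suppose C is not a subsphere, i.e. there is no linear subspace V of ℝⁿ with C = S ∩ V. Then there exists a point p ∈ C such that g(p) = p for every linear isometry g of ℝⁿ satisfying g(C) = C. -/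
open scoped RealInnerProductSpace

namespace Stmt5Helpers

open Real Set

variable {n : ℕ}

local notation "E" => EuclideanSpace ℝ (Fin n)

lemma inner_le_one {x y : E} (hx : ‖x‖ = 1) (hy : ‖y‖ = 1) : ⟪x, y⟫ ≤ 1 := by
  have := real_inner_le_norm x y
  rwa [hx, hy, one_mul] at this

lemma inner_lt_one {x y : E} (hx : ‖x‖ = 1) (hy : ‖y‖ = 1) (h : x ≠ y) : ⟪x, y⟫ < 1 := by
  rcases lt_or_eq_of_le (inner_le_one hx hy) with h1 | h1
  · exact h1
  · exact absurd ((inner_eq_one_iff_of_norm_eq_one hx hy).1 h1) h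

lemma neg_one_lt_inner {x y : E} (hx : ‖x‖ = 1) (hy : ‖y‖ = 1) (h : x ≠ -y) :
    -1 < ⟪x, y⟫ := by
  have h1 : ⟪x, -y⟫ < 1 := inner_lt_one hx (by rw [norm_neg]; exact hy) h
  rw [inner_neg_right] at h1
  linarith

lemma sdist_pos {x y : E} (hx : ‖x‖ = 1) (hy : ‖y‖ = 1) (h : x ≠ y) : 0 < sdist x y :=
  Real.arccos_pos.2 (inner_lt_one hx hy h)

lemma sdist_lt_pi {x y : E} (hx : ‖x‖ = 1) (hy : ‖y‖ = 1) (h : x ≠ -y) :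
    sdist x y < Real.pi := by
  refine lt_of_le_of_ne (Real.arccos_le_pi _) (fun hc => ?_)
  have := Real.arccos_eq_pi.1 hc
  have := neg_one_lt_inner hx hy h
  linarith

/-- The set of positive multiples of points of `C`. -/
def sconePos (C : Set E) : Set E := {x | ∃ t : ℝ, 0 < t ∧ ∃ c ∈ C, x = t • c}

/-- The cone over `C` (including the origin). -/
def scone (C : Set E) : Set E := insert 0 (sconePos C)

lemma sconePos_subset_scone {C : Set E} : sconePos C ⊆ scone C := Set.subset_insert _ _

lemma self_subset_sconePos {C : Set E} : C ⊆ sconePos C :=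
  fun c hc => ⟨1, one_pos, c, hc, (one_smul _ _).symm⟩

/-- Workhorse: a positive combination of two non-antipodal points of a spherically
convex set is a positive multiple of a point of the set. -/
lemma smul_add_smul_mem {C : Set E} (hsub : C ⊆ unitSphere n) (hconv : SphConvex C)
    {x y : E} (hx : x ∈ C) (hy : y ∈ C) (hxy : x ≠ -y) {α β : ℝ}
    (hα : 0 < α) (hβ : 0 < β) : α • x + β • y ∈ sconePos C := by
  by_cases hxy' : x = y
  · subst hxy'
    exact ⟨α + β, by positivity, x, hx, by rw [add_smul]⟩
  · have hx1 : ‖x‖ = 1 := hsub hx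
    have hy1 : ‖y‖ = 1 := hsub hy
    set θ := sdist x y with hθdef
    have hθ0 : 0 < θ := sdist_pos hx1 hy1 hxy'
    have hθπ : θ < Real.pi := sdist_lt_pi hx1 hy1 hxy
    have hsθ : 0 < Real.sin θ := Real.sin_pos_of_pos_of_lt_pi hθ0 hθπ
    set h : ℝ → ℝ := fun t => α * Real.sin (t * θ) - β * Real.sin ((1 - t) * θ) with hdef
    have hcont : ContinuousOn h (Set.Icc 0 1) := by
      apply Continuous.continuousOn
      fun_prop
    have h0 : h 0 = -(β * Real.sin θ) := by simp [hdef]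
    have h1' : h 1 = α * Real.sin θ := by simp [hdef]
    have hmem : (0 : ℝ) ∈ Set.Icc (h 0) (h 1) := by
      constructor
      · rw [h0]; nlinarith
      · rw [h1']; nlinarith
    obtain ⟨t, htmem, ht0⟩ := intermediate_value_Icc zero_le_one hcont hmem
    have htne : t ≠ 1 := by
      intro hh
      rw [hh, h1'] at ht0
      nlinarith
    have ht1 : t < 1 := lt_of_le_of_ne htmem.2 htne
    have hs2 : 0 < Real.sin ((1 - t) * θ) := by
      apply Real.sin_pos_of_pos_of_lt_pi
      · nlinarith [htmem.2]
      · nlinarith [htmem.1]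
    have hpt := hconv x hx y hy hxy' hxy t htmem
    have hht : α * Real.sin (t * θ) = β * Real.sin ((1 - t) * θ) := by
      have h' : α * Real.sin (t * θ) - β * Real.sin ((1 - t) * θ) = 0 := ht0
      linarith
    refine ⟨α * Real.sin θ / Real.sin ((1 - t) * θ), by positivity, _, hpt, ?_⟩
    have e1 : α * Real.sin θ / Real.sin ((1 - t) * θ) * (Real.sin ((1 - t) * θ) / Real.sin θ)
        = α := by field_simp
    have e2 : α * Real.sin θ / Real.sin ((1 - t) * θ) * (Real.sin (t * θ) / Real.sin θ)
        = β := by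
      field_simp
      nlinarith [hht]
    rw [smul_add, smul_smul, smul_smul, ← hθdef, e1, e2]

lemma sconePos_convex {C : Set E} (hsub : C ⊆ unitSphere n) (hconv : SphConvex C)
    (hna : ∀ z ∈ C, -z ∉ C) : Convex ℝ (sconePos C) := by
  rintro u ⟨s, hs, x, hxC, rfl⟩ v ⟨t, ht, y, hyC, rfl⟩ a b ha hb hab
  rcases eq_or_lt_of_le ha with rfl | ha'
  · have hb1 : b = 1 := by linarith
    subst hb1
    simpa using ⟨t, ht, y, hyC, rfl⟩
  rcases eq_or_lt_of_le hb with rfl | hb'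
  · have ha1 : a = 1 := by linarith
    subst ha1
    simpa using ⟨s, hs, x, hxC, rfl⟩
  have hxy : x ≠ -y := by
    intro hh
    exact hna y hyC (hh ▸ hxC)
  have := smul_add_smul_mem hsub hconv hxC hyC hxy (by positivity : (0:ℝ) < a * s)
    (by positivity : (0:ℝ) < b * t)
  rw [smul_smul, smul_smul] at *
  exact this

lemma smul_mem_scone {C : Set E} {r : ℝ} (hr : 0 ≤ r) {u : E} (hu : u ∈ scone C) :
    r • u ∈ scone C := by
  rcases hu with rfl | ⟨t, ht, c, hc, rfl⟩
  · simp [scone]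
  · rcases eq_or_lt_of_le hr with rfl | hr'
    · simp [scone]
    · exact Or.inr ⟨r * t, by positivity, c, hc, by rw [smul_smul]⟩

lemma scone_convex {C : Set E} (hsub : C ⊆ unitSphere n) (hconv : SphConvex C)
    (hsym : ∀ z ∈ C, -z ∈ C) : Convex ℝ (scone C) := by
  intro u hu v hv a b ha hb hab
  rcases hu with rfl | hu
  · rw [smul_zero, zero_add]; exact smul_mem_scone hb hv
  rcases hv with rfl | hv
  · rw [smul_zero, add_zero]; exact smul_mem_scone ha (Or.inr hu)
  obtain ⟨s, hs, x, hxC, rfl⟩ := hu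
  obtain ⟨t, ht, y, hyC, rfl⟩ := hv
  rcases eq_or_lt_of_le ha with rfl | ha'
  · rw [zero_smul, zero_add]; exact smul_mem_scone hb (Or.inr ⟨t, ht, y, hyC, rfl⟩)
  rcases eq_or_lt_of_le hb with rfl | hb'
  · rw [zero_smul, add_zero]; exact smul_mem_scone ha (Or.inr ⟨s, hs, x, hxC, rfl⟩)
  by_cases hxy : x = -y
  · subst hxy
    have hcomb : a • (s • -y) + b • (t • y) = (b * t - a * s) • y := by
      rw [smul_smul, smul_smul, sub_smul, smul_neg, sub_eq_add_neg, add_comm]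
    rw [hcomb]
    rcases lt_trichotomy (b * t - a * s) 0 with hlt | heq | hgt
    · refine Or.inr ⟨a * s - b * t, by linarith, -y, hsym y hyC, ?_⟩
      rw [smul_neg, ← neg_smul]
      ring_nf
    · rw [heq, zero_smul]; exact Or.inl rfl
    · exact Or.inr ⟨b * t - a * s, hgt, y, hyC, rfl⟩
  · have := smul_add_smul_mem hsub hconv hxC hyC hxy
      (by positivity : (0:ℝ) < a * s) (by positivity : (0:ℝ) < b * t)
    rw [smul_smul, smul_smul]
    exact Or.inr this

/-- For a symmetric spherically convex subset of the sphere, the cone over it is a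
linear subspace, and the set is the intersection of the sphere with that subspace. -/
lemma symm_subsphere {C : Set E} (hsub : C ⊆ unitSphere n) (hconv : SphConvex C)
    (hsym : ∀ z ∈ C, -z ∈ C) :
    ∃ V : Submodule ℝ E, (V : Set E) = scone C ∧ C = unitSphere n ∩ V := by
  have hcvx := scone_convex hsub hconv hsym
  refine ⟨{ carrier := scone C
            zero_mem' := Or.inl rfl
            add_mem' := ?_
            smul_mem' := ?_ }, rfl, ?_⟩
  · intro a b ha hb
    have hmid := hcvx ha hb (by norm_num : (0:ℝ) ≤ 1/2) (by norm_num : (0:ℝ) ≤ 1/2)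
      (by norm_num)
    have h2 := smul_mem_scone (by norm_num : (0:ℝ) ≤ 2) hmid
    have : (2:ℝ) • ((1/2 : ℝ) • a + (1/2 : ℝ) • b) = a + b := by
      rw [smul_add, smul_smul, smul_smul]; norm_num
    rwa [this] at h2
  · intro r x hx
    rcases le_or_gt 0 r with hr | hr
    · exact smul_mem_scone hr hx
    · rcases hx with rfl | ⟨t, ht, c, hc, rfl⟩
      · simp [scone]
      · refine Or.inr ⟨(-r) * t, mul_pos (neg_pos.2 hr) ht, -c, hsym c hc, ?_⟩
        rw [smul_smul, smul_neg, ← neg_smul, neg_mul, neg_neg]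
  · ext z
    constructor
    · intro hz
      exact ⟨hsub hz, Or.inr ⟨1, one_pos, z, hz, (one_smul _ _).symm⟩⟩
    · rintro ⟨hz1, hz2⟩
      have hz1' : ‖z‖ = 1 := hz1
      rcases (hz2 : z ∈ scone C) with rfl | ⟨t, ht, c, hc, rfl⟩
      · simp at hz1'
      · have hc1 : ‖c‖ = 1 := hsub hc
        rw [norm_smul, hc1, mul_one, Real.norm_eq_abs, abs_of_pos ht] at hz1'
        rw [hz1', one_smul]
        exact hc

/-- Carathéodory: the convex hull of a compact set in `ℝⁿ` is compact. -/
lemma isCompact_convexHull {s : Set E} (hs : IsCompact s) :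
    IsCompact (convexHull ℝ s) := by
  rcases s.eq_empty_or_nonempty with rfl | hsne
  · simp only [convexHull_empty]; exact isCompact_empty
  set N := n + 1 with hN
  have key : convexHull ℝ s =
      (fun p : (Fin N → ℝ) × (Fin N → E) => ∑ j, p.1 j • p.2 j) ''
        ((stdSimplex ℝ (Fin N)) ×ˢ (Set.univ.pi (fun _ => s))) := by
    apply Subset.antisymm
    · intro x hx
      obtain ⟨ι, hfin, z, w, hrange, hindep, hwpos, hwsum, hxeq⟩ :=
        eq_pos_convex_span_of_mem_convexHull hx
      have hne : Nonempty ι := by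
        by_contra hh
        rw [not_nonempty_iff] at hh
        rw [Finset.univ_eq_empty, Finset.sum_empty] at hwsum
        norm_num at hwsum
      set k := Fintype.card ι with hk
      have hk0 : 0 < k := Fintype.card_pos
      have hkN : k ≤ N := by
        have h1 := hindep.card_le_finrank_succ
        have h2 : Module.finrank ℝ ↥(vectorSpan ℝ (Set.range z)) ≤ n := by
          have := Submodule.finrank_le (vectorSpan ℝ (Set.range z))
          rwa [finrank_euclideanSpace_fin] at this
        omega
      set σ := Fintype.equivFin ι with hσ
      set p : ℕ → ι := fun m => σ.symm (if h : m < k then ⟨m, h⟩ else ⟨0, hk0⟩) with hp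
      have sum_lemma : ∀ (M : Type) (_ : AddCommMonoid M) (f : ι → M),
          (∑ j : Fin N, if (j : ℕ) < k then f (p j) else 0) = ∑ i : ι, f i := by
        intro M _ f
        rw [Fin.sum_univ_eq_sum_range (fun m => if m < k then f (p m) else 0) N]
        rw [← Finset.sum_subset (Finset.range_subset_range.2 hkN)
          (fun m _ hm => by rw [if_neg (by simpa using hm)])]
        rw [Finset.sum_congr rfl (fun m hm => if_pos (Finset.mem_range.1 hm))]
        rw [← Fin.sum_univ_eq_sum_range (fun m => f (p m)) k]
        have : ∀ j : Fin k, f (p (j : ℕ)) = f (σ.symm j) := by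
          intro j
          rw [hp]
          simp only [j.isLt, dif_pos, Fin.eta]
        rw [Finset.sum_congr rfl (fun j _ => this j)]
        exact Equiv.sum_comp σ.symm f
      refine ⟨⟨fun j => if (j : ℕ) < k then w (p j) else 0,
               fun j => if (j : ℕ) < k then z (p j) else z (p 0)⟩, ⟨?_, ?_⟩, ?_⟩
      · constructor
        · intro j
          dsimp only
          split
          · exact (hwpos _).le
          · exact le_refl 0
        · dsimp only
          rw [sum_lemma ℝ _ w]
          exact hwsum
      · intro j _
        dsimp only
        split
        · exact hrange ⟨_, rfl⟩
        · exact hrange ⟨_, rfl⟩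
      · dsimp only
        have : ∀ j : Fin N, (if (j : ℕ) < k then w (p j) else 0) •
            (if (j : ℕ) < k then z (p j) else z (p 0)) =
            (if (j : ℕ) < k then (fun i => w i • z i) (p j) else 0) := by
          intro j
          by_cases hj : (j : ℕ) < k
          · simp [hj]
          · simp [hj]
        rw [Finset.sum_congr rfl (fun j _ => this j), sum_lemma _ _ (fun i => w i • z i)]
        exact hxeq
    · rintro _ ⟨⟨w, z⟩, ⟨hw, hz⟩, rfl⟩
      have h1 : (Finset.univ : Finset (Fin N)).centerMass w z = ∑ j, w j • z j :=
        Finset.centerMass_eq_of_sum_1 _ _ hw.2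
      show (∑ j, w j • z j) ∈ convexHull ℝ s
      rw [← h1]
      exact Finset.centerMass_mem_convexHull _ (fun j _ => hw.1 j)
        (by rw [hw.2]; norm_num) (fun j _ => hz j (Set.mem_univ j))
  rw [key]
  apply IsCompact.image
  · exact (isCompact_stdSimplex _ _).prod (isCompact_univ_pi (fun _ => hs))
  · apply continuous_finset_sum
    intro j _
    exact ((continuous_apply j).comp continuous_fst).smul
      ((continuous_apply j).comp continuous_snd)

/-- The projection step: given a point of `C` which is not in the symmetric part, and a
unit vector `v` of the subspace spanned by the symmetric part with `⟪x,v⟫ < 0`, we can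
replace `x` by a point orthogonal to `v` retaining all previous orthogonality. -/
lemma proj_step {C : Set E} (hsub : C ⊆ unitSphere n) (hconv : SphConvex C)
    (V : Submodule ℝ E) (hV : ∀ z, ‖z‖ = 1 → (z ∈ V ↔ z ∈ C ∧ -z ∈ C))
    {x v : E} (hx : x ∈ C) (hxn : -x ∉ C) (hvV : v ∈ V) (hv1 : ‖v‖ = 1)
    (hneg : ⟪x, v⟫ < 0) :
    ∃ x', x' ∈ C ∧ -x' ∉ C ∧ ⟪x', v⟫ = 0 ∧
      ∀ u : E, ⟪x, u⟫ = 0 → ⟪v, u⟫ = 0 → ⟪x', u⟫ = 0 := by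
  have hvA := (hV v hv1).1 hvV
  have hx1 : ‖x‖ = 1 := hsub hx
  have hxv1 : x ≠ v := by
    intro h
    exact hxn (h ▸ hvA.2)
  have hxv2 : x ≠ -v := by
    intro h
    apply hxn
    rw [h, neg_neg]
    exact hvA.1
  set c := ⟪x, v⟫ with hc
  have hc1 : -1 < c := neg_one_lt_inner hx1 hv1 hxv2
  have hcle : c ≤ 1 := inner_le_one hx1 hv1
  have hsd : sdist x v = Real.arccos c := rfl
  set θ := Real.arccos c with hθdef
  have hθπ : θ < Real.pi := by
    refine lt_of_le_of_ne (Real.arccos_le_pi _) (fun hh => ?_)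
    have := Real.arccos_eq_pi.1 hh
    linarith
  have hθ2 : Real.pi / 2 < θ := by
    by_contra hh
    push_neg at hh
    have hcos : (0:ℝ) ≤ Real.cos (Real.arccos c) := Real.cos_nonneg_of_mem_Icc
      ⟨le_trans (by linarith [Real.pi_pos]) (Real.arccos_nonneg c), hh⟩
    rw [Real.cos_arccos hc1.le hcle] at hcos
    linarith
  have hθ0 : 0 < θ := lt_trans (by linarith [Real.pi_pos]) hθ2
  have hsθ : 0 < Real.sin θ := Real.sin_pos_of_pos_of_lt_pi hθ0 hθπ
  set t := 1 - Real.pi / (2 * θ) with htdef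
  have ht : t ∈ Set.Icc (0:ℝ) 1 := by
    constructor
    · rw [htdef, sub_nonneg, div_le_one (by linarith)]
      linarith
    · rw [htdef]
      have : 0 < Real.pi / (2 * θ) := by positivity
      linarith
  have key := hconv x hx v hvA.1 hxv1 hxv2 t ht
  have hcosθ : Real.cos θ = c := by rw [hθdef]; exact Real.cos_arccos hc1.le hcle
  have e1 : (1 - t) * sdist x v = Real.pi / 2 := by
    rw [hsd, htdef]
    field_simp
    ring
  have e2 : t * sdist x v = θ - Real.pi / 2 := by
    rw [hsd, htdef]
    field_simp
  rw [e1, e2, Real.sin_pi_div_two, Real.sin_sub_pi_div_two, hsd, hcosθ] at key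
  set x' := (1 / Real.sin θ) • x + (-c / Real.sin θ) • v with hx'def
  have hinner : ∀ u : E, ⟪x', u⟫ = (1 / Real.sin θ) * ⟪x, u⟫ + (-c / Real.sin θ) * ⟪v, u⟫ := by
    intro u
    rw [hx'def, inner_add_left, real_inner_smul_left, real_inner_smul_left]
  have hvv : ⟪v, v⟫ = 1 := by
    rw [real_inner_self_eq_norm_sq, hv1, one_pow]
  refine ⟨x', key, ?_, ?_, ?_⟩
  · intro hcon
    have hx'1 : ‖x'‖ = 1 := hsub key
    have hx'V : x' ∈ V := (hV x' hx'1).2 ⟨key, hcon⟩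
    have hxeq : x = Real.sin θ • x' + c • v := by
      rw [hx'def, smul_add, smul_smul, smul_smul,
        show Real.sin θ * (1 / Real.sin θ) = 1 by field_simp,
        show Real.sin θ * (-c / Real.sin θ) = -c by field_simp,
        one_smul, neg_smul]
      abel
    have hxV : x ∈ V := by
      rw [hxeq]
      exact V.add_mem (V.smul_mem _ hx'V) (V.smul_mem _ hvV)
    exact hxn ((hV x hx1).1 hxV).2
  · rw [hinner v, hvv, show (inner ℝ x v : ℝ) = c from hc.symm]
    ring
  · intro u h1 h2
    rw [hinner, h1, h2]
    ring

end Stmt5Helpers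

open Stmt5Helpers Set

set_option maxHeartbeats 2000000 in
theorem stmt5 {n : ℕ} (C : Set (EuclideanSpace ℝ (Fin n)))
    (hne : C.Nonempty) (hcl : IsClosed C) (hsub : C ⊆ unitSphere n)
    (hconv : SphConvex C)
    (hns : ¬ ∃ V : Submodule ℝ (EuclideanSpace ℝ (Fin n)),
      C = unitSphere n ∩ V) :
    ∃ p ∈ C, ∀ g : EuclideanSpace ℝ (Fin n) ≃ₗᵢ[ℝ] EuclideanSpace ℝ (Fin n),
      g '' C = C → g p = p := by
  classical
  by_cases hsym : ∀ z ∈ C, -z ∈ C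
  · obtain ⟨V, -, hCeq⟩ := symm_subsphere hsub hconv hsym
    exact absurd ⟨V, hCeq⟩ hns
  push_neg at hsym
  obtain ⟨x₀, hx₀C, hx₀n⟩ := hsym
  -- the symmetric part of C
  set A : Set (EuclideanSpace ℝ (Fin n)) := {z | z ∈ C ∧ -z ∈ C} with hAdef
  have hAsub : A ⊆ unitSphere n := fun z hz => hsub hz.1
  have hAconv : SphConvex A := by
    intro x hx y hy hne' hnne t ht
    constructor
    · exact hconv x hx.1 y hy.1 hne' hnne t ht
    · have hxy' : (-x) ≠ (-y) := fun h => hne' (neg_inj.1 h)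
      have hxy'' : (-x) ≠ -(-y) := by
        intro h
        apply hnne
        rw [← neg_neg x, h, neg_neg]
      have h2 := hconv (-x) hx.2 (-y) hy.2 hxy' hxy'' t ht
      have hsd : sdist (-x) (-y) = sdist x y := by
        unfold sdist
        rw [inner_neg_neg]
      rw [hsd] at h2
      have heq : (Real.sin ((1 - t) * sdist x y) / Real.sin (sdist x y)) • (-x) +
          (Real.sin (t * sdist x y) / Real.sin (sdist x y)) • (-y) =
          -((Real.sin ((1 - t) * sdist x y) / Real.sin (sdist x y)) • x +
            (Real.sin (t * sdist x y) / Real.sin (sdist x y)) • y) := by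
        rw [neg_add, smul_neg, smul_neg]
      rwa [heq] at h2
  have hAsym : ∀ z ∈ A, -z ∈ A := by
    intro z hz
    exact ⟨hz.2, by rw [neg_neg]; exact hz.1⟩
  obtain ⟨V, hVcoe, hAeq⟩ := symm_subsphere hAsub hAconv hAsym
  have hV : ∀ z, ‖z‖ = 1 → (z ∈ V ↔ z ∈ C ∧ -z ∈ C) := by
    intro z hz
    constructor
    · intro h
      have : z ∈ A := by rw [hAeq]; exact ⟨hz, h⟩
      exact this
    · intro h
      have : z ∈ unitSphere n ∩ ↑V := by rw [← hAeq]; exact h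
      exact this.2
  -- inductively построить a point of C orthogonal to V
  set m := Module.finrank ℝ ↥V with hm
  set b := stdOrthonormalBasis ℝ ↥V with hb
  have key : ∀ k : ℕ, ∃ x, x ∈ C ∧ -x ∉ C ∧
      ∀ i : Fin m, (i : ℕ) < k → ⟪x, ((b i : ↥V) : EuclideanSpace ℝ (Fin n))⟫ = 0 := by
    intro k
    induction k with
    | zero => exact ⟨x₀, hx₀C, hx₀n, fun i hi => absurd hi (Nat.not_lt_zero _)⟩
    | succ k ih =>
      obtain ⟨x, hxC, hxn, hxo⟩ := ih
      by_cases hk : k < m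
      · set v₀ : EuclideanSpace ℝ (Fin n) := ((b ⟨k, hk⟩ : ↥V) : EuclideanSpace ℝ (Fin n))
          with hv₀def
        have hv₀V : v₀ ∈ V := SetLike.coe_mem _
        have hv₀1 : ‖v₀‖ = 1 := b.orthonormal.1 ⟨k, hk⟩
        have horth : ∀ i : Fin m, (i : ℕ) < k → ⟪v₀, ((b i : ↥V) : EuclideanSpace ℝ (Fin n))⟫ = 0 := by
          intro i hi
          have hne'' : (⟨k, hk⟩ : Fin m) ≠ i := by
            intro h
            rw [← h] at hi
            exact absurd hi (lt_irrefl _)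
          have h0 : (inner ℝ (b ⟨k, hk⟩) (b i) : ℝ) = 0 := b.orthonormal.2 hne''
          rw [hv₀def, ← Submodule.coe_inner]
          exact h0
        rcases lt_trichotomy ⟪x, v₀⟫ 0 with hlt | heq0 | hgt
        · obtain ⟨x', h1, h2, h3, h4⟩ := proj_step hsub hconv V hV hxC hxn hv₀V hv₀1 hlt
          refine ⟨x', h1, h2, fun i hi => ?_⟩
          rcases Nat.lt_or_ge (i : ℕ) k with hik | hik
          · exact h4 _ (hxo i hik) (horth i hik)
          · have hieq : i = ⟨k, hk⟩ := Fin.ext (by simp only [Fin.val_mk]; omega)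
            rw [hieq]
            exact h3
        · refine ⟨x, hxC, hxn, fun i hi => ?_⟩
          rcases Nat.lt_or_ge (i : ℕ) k with hik | hik
          · exact hxo i hik
          · have hieq : i = ⟨k, hk⟩ := Fin.ext (by simp only [Fin.val_mk]; omega)
            rw [hieq]
            exact heq0
        · have hnegmem : -v₀ ∈ V := V.neg_mem hv₀V
          have hneg1 : ‖-v₀‖ = 1 := by rw [norm_neg]; exact hv₀1
          have hlt' : ⟪x, -v₀⟫ < 0 := by rw [inner_neg_right]; linarith
          obtain ⟨x', h1, h2, h3, h4⟩ := proj_step hsub hconv V hV hxC hxn hnegmem hneg1 hlt'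
          refine ⟨x', h1, h2, fun i hi => ?_⟩
          rcases Nat.lt_or_ge (i : ℕ) k with hik | hik
          · refine h4 _ (hxo i hik) ?_
            rw [inner_neg_left, horth i hik, neg_zero]
          · have hieq : i = ⟨k, hk⟩ := Fin.ext (by simp only [Fin.val_mk]; omega)
            rw [inner_neg_right] at h3
            rw [hieq, ← hv₀def, ← neg_eq_zero]
            exact h3
      · refine ⟨x, hxC, hxn, fun i hi => hxo i ?_⟩
        have := i.isLt
        omega
  obtain ⟨xb, hxbC, hxbn, hxbo⟩ := key m
  have hxbV : xb ∈ Vᗮ := by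
    rw [Submodule.mem_orthogonal]
    intro u hu
    have hsr : ((∑ i, b.repr ⟨u, hu⟩ i • b i : ↥V) : EuclideanSpace ℝ (Fin n)) = u := by
      rw [b.sum_repr ⟨u, hu⟩]
    calc ⟪u, xb⟫ = ⟪((∑ i, b.repr ⟨u, hu⟩ i • b i : ↥V) : EuclideanSpace ℝ (Fin n)), xb⟫ := by
          rw [hsr]
      _ = ∑ i, b.repr ⟨u, hu⟩ i * ⟪((b i : ↥V) : EuclideanSpace ℝ (Fin n)), xb⟫ := by
          rw [Submodule.coe_sum, sum_inner]
          congr 1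
          ext i
          rw [Submodule.coe_smul, real_inner_smul_left]
      _ = 0 := by
          apply Finset.sum_eq_zero
          intro i _
          rw [real_inner_comm, hxbo i i.isLt, mul_zero]
  set C' : Set (EuclideanSpace ℝ (Fin n)) := C ∩ (Vᗮ : Set (EuclideanSpace ℝ (Fin n)))
    with hC'def
  have hC'sub : C' ⊆ unitSphere n := fun z hz => hsub hz.1
  have hC'conv : SphConvex C' := by
    intro x hx y hy h1 h2 t ht
    refine ⟨hconv x hx.1 y hy.1 h1 h2 t ht, ?_⟩
    exact Submodule.add_mem _ (Submodule.smul_mem _ _ hx.2) (Submodule.smul_mem _ _ hy.2)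
  have hC'na : ∀ z ∈ C', -z ∉ C' := by
    intro z hz hz2
    have hz1 : ‖z‖ = 1 := hsub hz.1
    have hzV : z ∈ V := (hV z hz1).2 ⟨hz.1, hz2.1⟩
    have : ⟪z, z⟫ = 0 := (Submodule.mem_orthogonal _ _).1 hz.2 z hzV
    rw [real_inner_self_eq_norm_sq, hz1] at this
    norm_num at this
  have hC'cl : IsClosed C' := hcl.inter (Submodule.closed_of_finiteDimensional _)
  have hC'bd : Bornology.IsBounded C' := by
    rw [Metric.isBounded_iff_subset_closedBall 0]
    exact ⟨1, fun z hz => by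
      simp only [Metric.mem_closedBall, dist_zero_right]
      exact le_of_eq (hsub hz.1)⟩
  have hC'cp : IsCompact C' := Metric.isCompact_of_isClosed_isBounded hC'cl hC'bd
  set K := convexHull ℝ C' with hKdef
  have hKcp : IsCompact K := isCompact_convexHull hC'cp
  have hKne : K.Nonempty := ⟨xb, subset_convexHull ℝ C' ⟨hxbC, hxbV⟩⟩
  have hKsub : K ⊆ sconePos C' :=
    convexHull_min self_subset_sconePos (sconePos_convex hC'sub hC'conv hC'na)
  obtain ⟨q, hqK, hqmin⟩ := hKcp.exists_isMinOn hKne continuous_norm.continuousOn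
  obtain ⟨t, ht, c, hcC', hqtc⟩ := hKsub hqK
  have hc1 : ‖c‖ = 1 := hsub hcC'.1
  refine ⟨c, hcC'.1, ?_⟩
  intro g hg
  -- membership transfer under g and g.symm
  have hgmem : ∀ y ∈ C, g y ∈ C := by
    intro y hy
    have : g y ∈ g '' C := Set.mem_image_of_mem _ hy
    rwa [hg] at this
  have hgsmem : ∀ y ∈ C, g.symm y ∈ C := by
    intro y hy
    rw [← hg] at hy
    obtain ⟨w, hw, rfl⟩ := hy
    simpa using hw
  have hA_g : ∀ z ∈ A, g z ∈ A := by
    intro z hz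
    exact ⟨hgmem z hz.1, by rw [← map_neg]; exact hgmem _ hz.2⟩
  have hA_gs : ∀ z ∈ A, g.symm z ∈ A := by
    intro z hz
    exact ⟨hgsmem z hz.1, by rw [← map_neg]; exact hgsmem _ hz.2⟩
  have hV_g : ∀ z ∈ V, g z ∈ V := by
    intro z hz
    have hz' : z ∈ scone A := by rw [← hVcoe]; exact hz
    rcases hz' with rfl | ⟨s, hs, d, hd, rfl⟩
    · rw [map_zero]; exact V.zero_mem
    · have : g (s • d) ∈ scone A := Or.inr ⟨s, hs, g d, hA_g d hd, by rw [map_smul]⟩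
      show g (s • d) ∈ (V : Set (EuclideanSpace ℝ (Fin n)))
      rw [hVcoe]
      exact this
  have hV_gs : ∀ z ∈ V, g.symm z ∈ V := by
    intro z hz
    have hz' : z ∈ scone A := by rw [← hVcoe]; exact hz
    rcases hz' with rfl | ⟨s, hs, d, hd, rfl⟩
    · rw [map_zero]; exact V.zero_mem
    · have : g.symm (s • d) ∈ scone A := Or.inr ⟨s, hs, g.symm d, hA_gs d hd, by rw [map_smul]⟩
      show g.symm (s • d) ∈ (V : Set (EuclideanSpace ℝ (Fin n)))
      rw [hVcoe]
      exact this
  have hperp_g : ∀ z ∈ Vᗮ, g z ∈ Vᗮ := by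
    intro z hz
    rw [Submodule.mem_orthogonal]
    intro u hu
    have : ⟪g (g.symm u), g z⟫ = ⟪g.symm u, z⟫ := g.inner_map_map _ _
    rw [g.apply_symm_apply] at this
    rw [this]
    exact (Submodule.mem_orthogonal _ _).1 hz _ (hV_gs u hu)
  have hperp_gs : ∀ z ∈ Vᗮ, g.symm z ∈ Vᗮ := by
    intro z hz
    rw [Submodule.mem_orthogonal]
    intro u hu
    have : ⟪g.symm (g u), g.symm z⟫ = ⟪g u, z⟫ := g.symm.inner_map_map _ _
    rw [g.symm_apply_apply] at this
    rw [this]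
    exact (Submodule.mem_orthogonal _ _).1 hz _ (hV_g u hu)
  have hgC' : ∀ z ∈ C', g z ∈ C' := fun z hz => ⟨hgmem _ hz.1, hperp_g _ hz.2⟩
  have hgsC' : ∀ z ∈ C', g.symm z ∈ C' := fun z hz => ⟨hgsmem _ hz.1, hperp_gs _ hz.2⟩
  have hgC'img : g '' C' = C' := by
    apply Subset.antisymm
    · rintro _ ⟨w, hw, rfl⟩
      exact hgC' w hw
    · intro z hz
      exact ⟨g.symm z, hgsC' z hz, g.apply_symm_apply z⟩
  have hKg : g '' K = K := by
    have hlin : ∀ (e : EuclideanSpace ℝ (Fin n) ≃ₗᵢ[ℝ] EuclideanSpace ℝ (Fin n)),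
        ⇑e '' K = convexHull ℝ (⇑e '' C') := by
      intro e
      have : ⇑e = ⇑(e.toLinearEquiv.toLinearMap) := rfl
      rw [this, LinearMap.image_convexHull]
    rw [hlin g, hgC'img]
  have hgq : g q = q := by
    have hgqK : g q ∈ K := by
      rw [← hKg]
      exact Set.mem_image_of_mem _ hqK
    have hnq : ‖g q‖ = ‖q‖ := g.norm_map q
    set mpt := (1/2 : ℝ) • q + (1/2 : ℝ) • g q with hmptdef
    have hm : mpt ∈ K := (convex_convexHull ℝ C') hqK hgqK (by norm_num) (by norm_num)
      (by norm_num)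
    have h1 : ‖q‖ ≤ ‖mpt‖ := isMinOn_iff.1 hqmin mpt hm
    have hmpt2 : q + g q = (2:ℝ) • mpt := by
      rw [hmptdef, smul_add, smul_smul, smul_smul]
      norm_num
    have hsum : ‖q + g q‖ = 2 * ‖mpt‖ := by
      rw [hmpt2, norm_smul]
      norm_num
    have hpar := parallelogram_law_with_norm ℝ q (g q)
    have hz : ‖q - g q‖ = 0 := by
      nlinarith [norm_nonneg (q - g q), norm_nonneg q, norm_nonneg mpt]
    have := norm_eq_zero.1 hz
    rw [sub_eq_zero] at this
    exact this.symm
  have hcq : c = t⁻¹ • q := by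
    rw [hqtc, smul_smul, inv_mul_cancel₀ (ne_of_gt ht), one_smul]
  rw [hcq, g.map_smul, hgq]
end

section
/- Let C be a nonempty closed spherically convex subset of the unit sphere S of ℝⁿ whose diameter for the angular metric is strictly less than π. Then the intrinsic circumradius of C is less than π/2: there exists c₀ ∈ C such that sup_{x∈C} d(c₀,x) < π/2. -/
open scoped RealInnerProductSpace

/-- arccos is antitone. -/
lemma my_arccos_antitone : Antitone Real.arccos := fun x y h => by
  simp only [Real.arccos]
  have := Real.monotone_arcsin h
  linarith

/-- Compactness of the convex hull of a compact set in a finite-dimensional space. -/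
lemma my_isCompact_convexHull {E : Type*} [NormedAddCommGroup E] [NormedSpace ℝ E]
    [FiniteDimensional ℝ E] {s : Set E} (hs : IsCompact s) :
    IsCompact (convexHull ℝ s) := by
  classical
  rcases s.eq_empty_or_nonempty with rfl | hsne
  · simp
  set d := Module.finrank ℝ E + 1 with hd
  set T : ((Fin d → ℝ) × (Fin d → E)) → E := fun p => ∑ i, p.1 i • p.2 i with hTdef
  have hT : Continuous T := continuous_finset_sum _ fun i _ =>
    ((continuous_apply i).comp continuous_fst).smul ((continuous_apply i).comp continuous_snd)
  have hA : IsCompact ((stdSimplex ℝ (Fin d)) ×ˢ (Set.pi Set.univ fun _ : Fin d => s)) :=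
    (isCompact_stdSimplex (𝕜 := ℝ) (ι := Fin d)).prod (isCompact_univ_pi fun _ => hs)
  have himg : convexHull ℝ s
      = T '' ((stdSimplex ℝ (Fin d)) ×ˢ (Set.pi Set.univ fun _ : Fin d => s)) := by
    apply Set.Subset.antisymm
    · intro z hz
      rw [convexHull_eq_union] at hz
      simp only [Set.mem_iUnion] at hz
      obtain ⟨t, hts, hai, hzt⟩ := hz
      have htne : t.Nonempty := by
        rcases t.eq_empty_or_nonempty with rfl | h
        · simp at hzt
        · exact h
      obtain ⟨x0, hx0⟩ := htne
      haveI : Nonempty ↑t := ⟨⟨x0, hx0⟩⟩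
      have hcard : Fintype.card ↑t ≤ Fintype.card (Fin d) := by
        have h1 := hai.card_le_finrank_succ
        have h2 : Module.finrank ℝ (vectorSpan ℝ (Set.range ((↑) : t → E)))
            ≤ Module.finrank ℝ E := Submodule.finrank_le _
        simp only [Fintype.card_fin]
        omega
      obtain ⟨f⟩ := Function.Embedding.nonempty_of_card_le hcard
      rw [Finset.convexHull_eq] at hzt
      obtain ⟨w, hw0, hw1, hwz⟩ := hzt
      rw [t.centerMass_eq_of_sum_1 _ hw1] at hwz
      set g : Fin d → ↑t := Function.invFun f with hg
      have hgf : ∀ i, g (f i) = i := Function.leftInverse_invFun f.injective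
      set img : Finset (Fin d) := Finset.univ.image f with himgdef
      set W : Fin d → ℝ := fun j => if j ∈ img then w ((g j : E)) else 0 with hW
      set V : Fin d → E := fun j => ((g j : E)) with hV
      have hfinj : ∀ a ∈ (Finset.univ : Finset ↑t), ∀ b ∈ (Finset.univ : Finset ↑t),
          f a = f b → a = b := fun a _ b _ h => f.injective h
      have hsum : ∀ (F : Fin d → ℝ → E → E) (φ : ℝ → E → E), True := fun _ _ => trivial
      refine ⟨(W, V), ⟨⟨fun j => ?_, ?_⟩, fun j _ => hts (g j).2⟩, ?_⟩
      · simp only [hW]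
        split
        · exact hw0 _ (g j).2
        · exact le_rfl
      · have e1 : ∑ j, W j = ∑ j ∈ img, W j := by
          refine (Finset.sum_subset (Finset.subset_univ img) ?_).symm
          intro j _ hj
          simp [hW, hj]
        have e2 : ∑ j ∈ img, W j = ∑ j ∈ img, w ((g j : E)) := by
          refine Finset.sum_congr rfl fun j hj => ?_
          simp [hW, hj]
        rw [e1, e2, Finset.sum_image hfinj]
        have e3 : ∑ i : ↑t, w ((g (f i) : E)) = ∑ i : ↑t, w (i : E) := by
          refine Finset.sum_congr rfl fun i _ => by rw [hgf]
        rw [e3, ← hw1]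
        exact Finset.sum_coe_sort t w
      · show (∑ i, W i • V i) = z
        have e1 : ∑ j, W j • V j = ∑ j ∈ img, W j • V j := by
          refine (Finset.sum_subset (Finset.subset_univ img) ?_).symm
          intro j _ hj
          simp [hW, hj]
        have e2 : ∑ j ∈ img, W j • V j = ∑ j ∈ img, w ((g j : E)) • ((g j : E)) := by
          refine Finset.sum_congr rfl fun j hj => ?_
          simp [hW, hV, hj]
        rw [e1, e2, Finset.sum_image hfinj]
        have e3 : ∑ i : ↑t, w ((g (f i) : E)) • ((g (f i) : E))
            = ∑ i : ↑t, w (i : E) • (i : E) := by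
          refine Finset.sum_congr rfl fun i _ => by rw [hgf]
        rw [e3, ← hwz]
        exact Finset.sum_coe_sort t (fun y => w y • id y)
    · rintro _ ⟨⟨W, V⟩, ⟨⟨hW0, hW1⟩, hV⟩, rfl⟩
      exact Convex.sum_mem (convex_convexHull ℝ s) (fun i _ => hW0 i) hW1
        (fun i _ => subset_convexHull ℝ s (hV i (Set.mem_univ i)))
  rw [himg]
  exact hA.image hT


lemma seg_eq_smul_geodesic {n : ℕ} {x y : EuclideanSpace ℝ (Fin n)}
    (hx : ‖x‖ = 1) (hy : ‖y‖ = 1) (hxy : x ≠ y) (hi : -1 < ⟪x, y⟫)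
    {s : ℝ} (hs0 : 0 ≤ s) (hs1 : s ≤ 1) :
    ∃ t ∈ Set.Icc (0:ℝ) 1, ∃ lam : ℝ, 0 < lam ∧
      (1 - s) • x + s • y =
        lam • ((Real.sin ((1 - t) * sdist x y) / Real.sin (sdist x y)) • x +
          (Real.sin (t * sdist x y) / Real.sin (sdist x y)) • y) := by
  have hi1 : ⟪x, y⟫ < 1 := (inner_lt_one_iff_real_of_norm_eq_one hx hy).mpr hxy
  set θ := sdist x y with hθdef
  have hθ0 : 0 < θ := Real.arccos_pos.mpr hi1
  have hθπ : θ < Real.pi := by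
    rcases lt_or_eq_of_le (Real.arccos_le_pi ⟪x, y⟫) with h | h
    · exact h
    · exact absurd (Real.arccos_eq_pi.mp h) (by linarith)
  have hsinθ : 0 < Real.sin θ := Real.sin_pos_of_pos_of_lt_pi hθ0 hθπ
  set f : ℝ → ℝ := fun t => (1 - s) * Real.sin (t * θ) - s * Real.sin ((1 - t) * θ) with hf
  have hcont : ContinuousOn f (Set.Icc 0 1) := Continuous.continuousOn (by fun_prop)
  have hmem : (0:ℝ) ∈ Set.Icc (f 0) (f 1) := by
    constructor
    · show f 0 ≤ 0
      simp only [hf, zero_mul, Real.sin_zero, mul_zero, sub_zero, zero_sub, one_mul]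
      simp only [neg_nonpos]
      positivity
    · show (0:ℝ) ≤ f 1
      simp only [hf, one_mul, sub_self, zero_mul, Real.sin_zero, mul_zero, sub_zero]
      have : 0 ≤ 1 - s := by linarith
      positivity
  obtain ⟨t, ht, hft⟩ := intermediate_value_Icc zero_le_one hcont hmem
  set a := Real.sin ((1 - t) * θ) / Real.sin θ with ha
  set b := Real.sin (t * θ) / Real.sin θ with hb
  have htθπ : t * θ < Real.pi := lt_of_le_of_lt (by nlinarith [ht.2, ht.1]) hθπ
  have ht'θπ : (1 - t) * θ < Real.pi := lt_of_le_of_lt (by nlinarith [ht.2, ht.1]) hθπ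
  have hb0 : 0 ≤ Real.sin (t * θ) :=
    Real.sin_nonneg_of_nonneg_of_le_pi (mul_nonneg ht.1 hθ0.le) htθπ.le
  have ha0 : 0 ≤ Real.sin ((1 - t) * θ) :=
    Real.sin_nonneg_of_nonneg_of_le_pi (mul_nonneg (by linarith [ht.2]) hθ0.le) ht'θπ.le
  have hab : 0 < a + b := by
    rcases ht.1.eq_or_lt with h | h
    · have : a = 1 := by rw [ha, ← h]; simp [div_self hsinθ.ne']
      have hb' : 0 ≤ b := div_nonneg hb0 hsinθ.le
      linarith
    · have hbpos : 0 < Real.sin (t * θ) :=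
        Real.sin_pos_of_pos_of_lt_pi (mul_pos h hθ0) htθπ
      have : 0 < b := div_pos hbpos hsinθ
      have ha' : 0 ≤ a := div_nonneg ha0 hsinθ.le
      linarith
  have hcross : (1 - s) * b = s * a := by
    have : (1 - s) * Real.sin (t * θ) = s * Real.sin ((1 - t) * θ) := by
      have := hft
      simp only [hf] at this
      linarith
    rw [ha, hb]
    field_simp
    rw [mul_comm θ (1 - t)]
    linarith
  have h1 : 1 - s = (1 / (a + b)) * a := by
    have : (1 - s) * (a + b) = a := by nlinarith [hcross]
    field_simp
    linarith
  have h2 : s = (1 / (a + b)) * b := by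
    have : s * (a + b) = b := by nlinarith [hcross]
    field_simp
    linarith
  refine ⟨t, ht, 1 / (a + b), by positivity, ?_⟩
  rw [smul_add, smul_smul, smul_smul, ← ha, ← hb, ← h1, ← h2]

lemma comb_mem_cone {n : ℕ} {C : Set (EuclideanSpace ℝ (Fin n))}
    (hsub : C ⊆ unitSphere n) (hconv : SphConvex C)
    {D : ℝ} (hD : D < Real.pi) (hdiam : ∀ x ∈ C, ∀ y ∈ C, sdist x y ≤ D)
    {c d : EuclideanSpace ℝ (Fin n)} (hc : c ∈ C) (hd : d ∈ C)
    {A B : ℝ} (hA : 0 ≤ A) (hB : 0 ≤ B) (hAB : 0 < A + B) :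
    ∃ μ : ℝ, 0 < μ ∧ ∃ g ∈ C, A • c + B • d = μ • g := by
  have hcn : ‖c‖ = 1 := hsub hc
  have hdn : ‖d‖ = 1 := hsub hd
  by_cases hcd : c = d
  · refine ⟨A + B, hAB, d, hd, ?_⟩
    rw [hcd, ← add_smul]
  · have hinner : -1 < ⟪c, d⟫ := by
      by_contra h
      push_neg at h
      have h2 : sdist c d = Real.pi := Real.arccos_eq_pi.mpr h
      have := hdiam c hc d hd
      linarith
    set s := B / (A + B) with hs
    have hs0 : 0 ≤ s := div_nonneg hB hAB.le
    have hs1 : s ≤ 1 := by rw [hs, div_le_one hAB]; linarith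
    obtain ⟨t, ht, lam, hlam, heq⟩ := seg_eq_smul_geodesic hcn hdn hcd hinner hs0 hs1
    have hcd' : c ≠ -d := by
      intro h
      rw [h, inner_neg_left, real_inner_self_eq_norm_sq, hdn] at hinner
      norm_num at hinner
    have hg := hconv c hc d hd hcd hcd' t ht
    refine ⟨(A + B) * lam, by positivity, _, hg, ?_⟩
    have e1 : (A + B) * (1 - s) = A := by
      rw [hs, mul_sub, mul_one, mul_div_cancel₀ _ hAB.ne']
      ring
    have e2 : (A + B) * s = B := by
      rw [hs, mul_div_cancel₀ _ hAB.ne']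
    have e3 : A • c + B • d = (A + B) • ((1 - s) • c + s • d) := by
      rw [smul_add, smul_smul, smul_smul, e1, e2]
    rw [e3, heq, smul_smul]

lemma hull_subset_cone {n : ℕ} {C : Set (EuclideanSpace ℝ (Fin n))}
    (hsub : C ⊆ unitSphere n) (hconv : SphConvex C)
    {D : ℝ} (hD : D < Real.pi) (hdiam : ∀ x ∈ C, ∀ y ∈ C, sdist x y ≤ D) :
    convexHull ℝ C ⊆ {z | ∃ μ : ℝ, 0 < μ ∧ ∃ g ∈ C, z = μ • g} := by
  apply convexHull_min
  · intro z hz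
    exact ⟨1, one_pos, z, hz, (one_smul _ _).symm⟩
  · intro z hz w hw α β hα hβ hαβ
    obtain ⟨μ, hμ, cz, hcz, rfl⟩ := hz
    obtain ⟨ν, hν, cw, hcw, rfl⟩ := hw
    have hABpos : 0 < α * μ + β * ν := by
      have hm : 0 < min μ ν := lt_min hμ hν
      nlinarith [mul_nonneg hα (sub_nonneg.mpr (min_le_left μ ν)),
        mul_nonneg hβ (sub_nonneg.mpr (min_le_right μ ν))]
    obtain ⟨μ', hμ', g, hg, hgeq⟩ := comb_mem_cone hsub hconv hD hdiam hcz hcw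
      (mul_nonneg hα hμ.le) (mul_nonneg hβ hν.le) hABpos
    refine ⟨μ', hμ', g, hg, ?_⟩
    rw [smul_smul, smul_smul]
    exact hgeq

theorem stmt6 {n : ℕ} (C : Set (EuclideanSpace ℝ (Fin n)))
    (hne : C.Nonempty) (hcl : IsClosed C) (hsub : C ⊆ unitSphere n)
    (hconv : SphConvex C)
    -- the diameter of `C` for the angular metric is strictly less than `π`
    (hdiam : ∃ D : ℝ, D < Real.pi ∧ ∀ x ∈ C, ∀ y ∈ C, sdist x y ≤ D) :
    ∃ c₀ ∈ C, ∃ r : ℝ, r < Real.pi / 2 ∧ ∀ x ∈ C, sdist c₀ x ≤ r := by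
  obtain ⟨D, hDπ, hdiam⟩ := hdiam
  have hCbdd : Bornology.IsBounded C := by
    apply (Metric.isBounded_closedBall (x := (0 : EuclideanSpace ℝ (Fin n))) (r := 1)).subset
    intro x hx
    rw [Metric.mem_closedBall, dist_zero_right]
    exact le_of_eq (hsub hx)
  have hCcp : IsCompact C := Metric.isCompact_of_isClosed_isBounded hcl hCbdd
  have hK : IsCompact (convexHull ℝ C) := my_isCompact_convexHull hCcp
  have hKne : (convexHull ℝ C).Nonempty := hne.mono (subset_convexHull ℝ C)
  haveI : Nonempty ↑(convexHull ℝ C) := hKne.to_subtype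
  obtain ⟨p, hpK, hpmin⟩ := hK.exists_isMinOn hKne continuous_norm.continuousOn
  obtain ⟨μ, hμ, c₀, hc₀, hpeq⟩ := hull_subset_cone hsub hconv hDπ hdiam hpK
  have hc₀n : ‖c₀‖ = 1 := hsub hc₀
  -- projection inequality
  have key : ∀ w ∈ convexHull ℝ C, 0 ≤ ⟪p, w - p⟫ := by
    intro w hw
    by_contra hneg
    push_neg at hneg
    set I := ⟪p, w - p⟫ with hI
    set N := ‖w - p‖ ^ 2 with hN
    have hNpos : 0 < N := by
      rcases eq_or_ne w p with rfl | hne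
      · rw [hI, sub_self, inner_zero_right] at hneg
        exact absurd hneg (lt_irrefl 0)
      · exact pow_pos (norm_pos_iff.mpr (sub_ne_zero.mpr hne)) 2
    set t := min 1 (-I / N) with htdef
    have ht0 : 0 < t := lt_min one_pos (div_pos (neg_pos.mpr hneg) hNpos)
    have ht1 : t ≤ 1 := min_le_left _ _
    have hq : p + t • (w - p) ∈ convexHull ℝ C := by
      have h := (convex_convexHull ℝ C) hpK hw (by linarith : (0:ℝ) ≤ 1 - t) ht0.le
        (by ring : (1 - t) + t = 1)
      have heq : (1 - t) • p + t • w = p + t • (w - p) := by module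
      rwa [heq] at h
    have hle : ‖p‖ ≤ ‖p + t • (w - p)‖ := isMinOn_iff.mp hpmin _ hq
    have hsq : ‖p + t • (w - p)‖ ^ 2 = ‖p‖ ^ 2 + 2 * (t * I) + t ^ 2 * N := by
      rw [norm_add_sq_real, real_inner_smul_right, norm_smul, mul_pow, Real.norm_eq_abs, sq_abs, hI, hN]
    have hle2 : ‖p‖ ^ 2 ≤ ‖p + t • (w - p)‖ ^ 2 := by
      have := norm_nonneg p
      nlinarith
    have h0 : 0 ≤ 2 * I + t * N := by
      have hmul : 0 ≤ t * (2 * I + t * N) := by nlinarith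
      exact (mul_nonneg_iff_of_pos_left ht0).mp hmul
    have htN : t * N ≤ -I := by
      have := mul_le_mul_of_nonneg_right (min_le_right 1 (-I / N)) hNpos.le
      rwa [div_mul_cancel₀ _ hNpos.ne'] at this
    linarith
  have hproj : ∀ w ∈ convexHull ℝ C, ⟪p, p⟫ ≤ ⟪p, w⟫ := by
    intro w hw
    have h := key w hw
    rw [inner_sub_right] at h
    linarith
  have hpp : ⟪p, p⟫ = μ ^ 2 := by
    rw [hpeq, real_inner_smul_left, real_inner_smul_right, real_inner_self_eq_norm_sq, hc₀n]
    ring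
  refine ⟨c₀, hc₀, Real.arccos μ, Real.arccos_lt_pi_div_two.mpr hμ, ?_⟩
  intro x hx
  have hx' : x ∈ convexHull ℝ C := subset_convexHull ℝ C hx
  have h3 : μ ^ 2 ≤ μ * ⟪c₀, x⟫ := by
    have := hproj x hx'
    rw [hpp] at this
    rw [hpeq, real_inner_smul_left] at this
    linarith
  have h4 : μ ≤ ⟪c₀, x⟫ := by
    nlinarith
  exact my_arccos_antitone h4
end

section
/- Let V and W be nonzero linear subspaces of ℝⁿ and let S be the unit sphere of ℝⁿ with the angular metric. The smallest closed spherically convex subset of S containing (S ∩ V) ∪ (S ∩ W) is the subsphere S ∩ (V + W). In particular, the closed convex hull in S of a union of two subspheres is again a subsphere. -/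
open scoped RealInnerProductSpace

/-- Auxiliary algebraic inequality. -/
lemma aux_ineq (a b c : ℝ) (h : a^2+b^2+2*(a*b)*c = 1) (ha : 0 < a) (hb : 0 < b)
    (h1 : c < 1) (h2 : -1 < c) : c ≤ a + b*c := by
  by_contra hcon
  push_neg at hcon
  have h3 : a < c*(1-b) := by nlinarith
  rcases le_or_gt b 1 with hb1 | hb1
  · have hc0 : 0 < c := by
      rcases le_or_gt c 0 with hc | hc
      · nlinarith [mul_nonneg (by linarith : (0:ℝ) ≤ 1-b) (by linarith : (0:ℝ) ≤ -c)]
      · exact hc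
    have q1 : a*a < (c*(1-b))*(c*(1-b)) := mul_self_lt_mul_self ha.le h3
    have q2 : 2*(a*(b*c)) < 2*((c*(1-b))*(b*c)) := by
      have := mul_lt_mul_of_pos_right h3 (mul_pos hb hc0)
      linarith
    nlinarith [mul_nonneg (by nlinarith : (0:ℝ) ≤ 1-c^2) (by nlinarith : (0:ℝ) ≤ 1-b^2)]
  · have hc0 : c < 0 := by nlinarith [mul_pos (by linarith : (0:ℝ) < b-1) ha]
    have h4 : a < (-c)*(b-1) := by nlinarith
    have q1 : a*a < ((-c)*(b-1))*((-c)*(b-1)) := mul_self_lt_mul_self ha.le h4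
    have q2 : 2*(a*(b*(-c))) < 2*(((-c)*(b-1))*(b*(-c))) := by
      have := mul_lt_mul_of_pos_right h4 (mul_pos hb (by linarith : (0:ℝ) < -c))
      linarith
    nlinarith [mul_pos (mul_pos (by linarith : (0:ℝ) < b-1) (by linarith : (0:ℝ) < b+1))
      (by nlinarith : (0:ℝ) < 1-c^2)]

/-- Trigonometric identity. -/
lemma aux_trig (A B : ℝ) :
    Real.sin A ^ 2 + Real.sin B ^ 2 + 2 * Real.sin A * Real.sin B * Real.cos (A+B)
      = Real.sin (A+B) ^ 2 := by
  rw [Real.sin_add, Real.cos_add]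
  linear_combination (-(Real.sin A ^ 2)) * Real.sin_sq_add_cos_sq B +
    (-(Real.sin B ^ 2)) * Real.sin_sq_add_cos_sq A

/-- Arithmetic helper. -/
lemma aux_div (SA SB s c : ℝ) (hs : s ≠ 0) (hkey : SA^2+SB^2+2*SA*SB*c = s^2) :
    (SA/s)^2 + (SB/s)^2 + 2*((SA/s)*(SB/s))*c = 1 := by
  field_simp
  linear_combination hkey

/-- Norm of a linear combination of unit vectors. -/
lemma aux_norm {n : ℕ} (x y : EuclideanSpace ℝ (Fin n)) (hx : ‖x‖ = 1) (hy : ‖y‖ = 1)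
    (a b : ℝ) : ‖a • x + b • y‖ ^ 2 = a^2 + b^2 + 2*(a*b)*⟪x, y⟫ := by
  rw [norm_add_sq_real, norm_smul, norm_smul, real_inner_smul_left, real_inner_smul_right,
    hx, hy]
  simp only [Real.norm_eq_abs, mul_one]
  rw [sq_abs, sq_abs]
  ring

/-- Inner product bounds for distinct non-antipodal unit vectors. -/
lemma aux_inner {n : ℕ} {x y : EuclideanSpace ℝ (Fin n)} (hx : ‖x‖ = 1) (hy : ‖y‖ = 1)
    (hxy : x ≠ y) (hxy' : x ≠ -y) : -1 < ⟪x, y⟫ ∧ ⟪x, y⟫ < 1 := by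
  constructor
  · have hle : ⟪x, -y⟫ ≤ 1 := by
      have := real_inner_le_norm x (-y)
      rw [norm_neg, hx, hy] at this
      linarith
    have hne : ⟪x, -y⟫ ≠ 1 := fun h =>
      hxy' ((inner_eq_one_iff_of_norm_eq_one hx (by rw [norm_neg, hy])).mp h)
    have : ⟪x, -y⟫ < 1 := lt_of_le_of_ne hle hne
    rw [inner_neg_right] at this
    linarith
  · have hle : ⟪x, y⟫ ≤ 1 := by
      have := real_inner_le_norm x y
      rw [hx, hy] at this
      linarith
    exact lt_of_le_of_ne hle fun h => hxy ((inner_eq_one_iff_of_norm_eq_one hx hy).mp h)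

/-- Key lemma: a spherically convex set containing two unit vectors contains every
unit vector which is a positive combination of them. -/
lemma aux_key {n : ℕ} {D : Set (EuclideanSpace ℝ (Fin n))} (hD : SphConvex D)
    {v w : EuclideanSpace ℝ (Fin n)} (hv : v ∈ D) (hw : w ∈ D)
    (hv1 : ‖v‖ = 1) (hw1 : ‖w‖ = 1) {α β : ℝ} (hα : 0 < α) (hβ : 0 < β)
    (hx : ‖α • v + β • w‖ = 1) : α • v + β • w ∈ D := by
  by_cases hvw : v = w
  · subst hvw
    rw [← add_smul] at hx ⊢
    rw [norm_smul, hv1, mul_one, Real.norm_eq_abs, abs_of_pos (by linarith)] at hx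
    rw [hx, one_smul]; exact hv
  by_cases hvw' : v = -w
  · have hwv : w = -v := by rw [hvw', neg_neg]
    subst hwv
    have e : α • v + β • (-v) = (α - β) • v := by
      rw [smul_neg, sub_smul]; abel
    rw [e] at hx ⊢
    rw [norm_smul, hv1, mul_one, Real.norm_eq_abs] at hx
    rcases abs_eq (by norm_num : (0:ℝ) ≤ 1) |>.mp hx with h1 | h1
    · rw [h1, one_smul]; exact hv
    · rw [h1]; rw [show (-1 : ℝ) • v = -v from neg_one_smul ℝ v]; exact hw
  -- main case
  obtain ⟨hc2, hc1⟩ := aux_inner hv1 hw1 hvw hvw'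
  set c : ℝ := ⟪v, w⟫ with hc
  set θ : ℝ := Real.arccos c with hθ
  have hθpos : 0 < θ := Real.arccos_pos.2 hc1
  have hθpi : θ < Real.pi := lt_of_le_of_ne (Real.arccos_le_pi c)
    (fun h => by have := Real.arccos_eq_pi.mp h; linarith)
  have hcos : Real.cos θ = c := Real.cos_arccos (by linarith) (by linarith)
  set s : ℝ := Real.sin θ with hs
  have hspos : 0 < s := Real.sin_pos_of_pos_of_lt_pi hθpos hθpi
  have hs2 : s^2 = 1 - c^2 := by
    rw [hs, hθ, Real.sin_arccos]
    exact Real.sq_sqrt (by nlinarith)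
  have hcon : α^2 + β^2 + 2*(α*β)*c = 1 := by
    have h := aux_norm v w hv1 hw1 α β
    rw [hx, one_pow] at h
    linarith
  set u : ℝ := α + β * c with hu
  have hu2 : u^2 = 1 - (β*s)^2 := by
    rw [hu]; nlinarith [hs2, hcon]
  have hu_le : u ≤ 1 := by nlinarith [sq_nonneg (β*s)]
  have hu_ge : -1 ≤ u := by nlinarith [sq_nonneg (β*s)]
  set φ : ℝ := Real.arccos u with hφ
  have hφ0 : 0 ≤ φ := Real.arccos_nonneg u
  have hcosφ : Real.cos φ = u := Real.cos_arccos hu_ge hu_le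
  have hsinφ : Real.sin φ = β * s := by
    rw [hφ, Real.sin_arccos, show 1 - u^2 = (β*s)^2 by linarith]
    exact Real.sqrt_sq (by positivity)
  have hcu : c ≤ u := aux_ineq α β c hcon hα hβ hc1 hc2
  have hφθ : φ ≤ θ := by
    by_contra hlt
    push_neg at hlt
    have := Real.cos_lt_cos_of_nonneg_of_le_pi (Real.arccos_nonneg c)
      (Real.arccos_le_pi u) hlt
    rw [hcos, hcosφ] at this
    exact absurd hcu (not_le.2 this)
  set t : ℝ := φ / θ with ht
  have htmem : t ∈ Set.Icc (0:ℝ) 1 :=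
    ⟨div_nonneg hφ0 hθpos.le, (div_le_one hθpos).2 hφθ⟩
  have h := hD v hv w hw hvw hvw' t htmem
  have hsd : sdist v w = θ := rfl
  have htθ : t * θ = φ := div_mul_cancel₀ φ hθpos.ne'
  have ht1θ : (1 - t) * θ = θ - φ := by
    rw [ht]; field_simp
  rw [hsd, htθ, ht1θ] at h
  have e1 : Real.sin (θ - φ) / s = α := by
    rw [Real.sin_sub, hcosφ, hsinφ, hcos, hu]
    field_simp
    ring
  have e2 : Real.sin φ / s = β := by
    rw [hsinφ]
    field_simp
  rw [e1, e2] at h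
  exact h

theorem stmt7 {n : ℕ} (V W : Submodule ℝ (EuclideanSpace ℝ (Fin n)))
    (hV : V ≠ ⊥) (hW : W ≠ ⊥) :
    -- `S ∩ (V + W)` is a closed spherically convex subset of `S`
    IsClosed (unitSphere n ∩ (V ⊔ W : Submodule ℝ (EuclideanSpace ℝ (Fin n))) :
      Set (EuclideanSpace ℝ (Fin n))) ∧
    SphConvex (unitSphere n ∩ (V ⊔ W : Submodule ℝ (EuclideanSpace ℝ (Fin n)))) ∧
    -- it contains `(S ∩ V) ∪ (S ∩ W)`
    (unitSphere n ∩ V) ∪ (unitSphere n ∩ W) ⊆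
      unitSphere n ∩ (V ⊔ W : Submodule ℝ (EuclideanSpace ℝ (Fin n))) ∧
    -- and it is the smallest such: any closed spherically convex subset of `S`
    -- containing `(S ∩ V) ∪ (S ∩ W)` contains it
    ∀ D : Set (EuclideanSpace ℝ (Fin n)), IsClosed D → SphConvex D →
      D ⊆ unitSphere n → (unitSphere n ∩ V) ∪ (unitSphere n ∩ W) ⊆ D →
      unitSphere n ∩ (V ⊔ W : Submodule ℝ (EuclideanSpace ℝ (Fin n))) ⊆ D := by
  refine ⟨?_, ?_, ?_, ?_⟩
  · -- closedness
    have h1 : IsClosed (unitSphere n) := by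
      have : unitSphere n = (fun x : EuclideanSpace ℝ (Fin n) => ‖x‖) ⁻¹' {1} := rfl
      rw [this]
      exact isClosed_singleton.preimage continuous_norm
    exact h1.inter (Submodule.closed_of_finiteDimensional _)
  · -- spherical convexity
    rintro x ⟨hx1, hxU⟩ y ⟨hy1, hyU⟩ hxy hxy' t ht
    obtain ⟨hc2, hc1⟩ := aux_inner hx1 hy1 hxy hxy'
    set c : ℝ := ⟪x, y⟫ with hc
    have hsd : sdist x y = Real.arccos c := rfl
    set θ : ℝ := Real.arccos c with hθ
    have hθpos : 0 < θ := Real.arccos_pos.2 hc1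
    have hθpi : θ < Real.pi := lt_of_le_of_ne (Real.arccos_le_pi c)
      (fun h => by have := Real.arccos_eq_pi.mp h; linarith)
    have hcos : Real.cos θ = c := Real.cos_arccos (by linarith) (by linarith)
    have hspos : 0 < Real.sin θ := Real.sin_pos_of_pos_of_lt_pi hθpos hθpi
    rw [hsd]
    constructor
    · -- norm one
      show ‖_‖ = 1
      set a : ℝ := Real.sin ((1 - t) * θ) / Real.sin θ with hadef
      set b : ℝ := Real.sin (t * θ) / Real.sin θ with hbdef
      have hsq : ‖a • x + b • y‖ ^ 2 = 1 := by
        rw [aux_norm x y hx1 hy1 a b, ← hc]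
        have key := aux_trig ((1 - t) * θ) (t * θ)
        rw [show (1 - t) * θ + t * θ = θ by ring, hcos] at key
        rw [hadef, hbdef]
        exact aux_div _ _ _ _ hspos.ne' key
      nlinarith [norm_nonneg (a • x + b • y), hsq]
    · -- membership in the subspace
      exact Submodule.add_mem _ (Submodule.smul_mem _ _ hxU) (Submodule.smul_mem _ _ hyU)
  · -- contains the two subspheres
    rintro x (⟨hx1, hxV⟩ | ⟨hx1, hxW⟩)
    · exact ⟨hx1, Submodule.mem_sup_left hxV⟩
    · exact ⟨hx1, Submodule.mem_sup_right hxW⟩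
  · -- minimality
    rintro D _hDc hDconv _hDS hDsub x ⟨hxS, hxU⟩
    obtain ⟨v₀, hv₀, w₀, hw₀, rfl⟩ := Submodule.mem_sup.mp hxU
    by_cases hv0 : v₀ = 0
    · subst hv0
      rw [zero_add] at hxS ⊢
      exact hDsub (Or.inr ⟨hxS, hw₀⟩)
    by_cases hw0 : w₀ = 0
    · subst hw0
      rw [add_zero] at hxS ⊢
      exact hDsub (Or.inl ⟨hxS, hv₀⟩)
    set v : EuclideanSpace ℝ (Fin n) := ‖v₀‖⁻¹ • v₀ with hvdef
    set w : EuclideanSpace ℝ (Fin n) := ‖w₀‖⁻¹ • w₀ with hwdef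
    have hv1 : ‖v‖ = 1 := by
      rw [hvdef, norm_smul, norm_inv, norm_norm,
        inv_mul_cancel₀ (norm_ne_zero_iff.2 hv0)]
    have hw1 : ‖w‖ = 1 := by
      rw [hwdef, norm_smul, norm_inv, norm_norm,
        inv_mul_cancel₀ (norm_ne_zero_iff.2 hw0)]
    have hvD : v ∈ D := hDsub (Or.inl ⟨hv1, Submodule.smul_mem _ _ hv₀⟩)
    have hwD : w ∈ D := hDsub (Or.inr ⟨hw1, Submodule.smul_mem _ _ hw₀⟩)
    have hv' : ‖v₀‖ • v = v₀ := by
      rw [hvdef, smul_smul, mul_inv_cancel₀ (norm_ne_zero_iff.2 hv0), one_smul]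
    have hw' : ‖w₀‖ • w = w₀ := by
      rw [hwdef, smul_smul, mul_inv_cancel₀ (norm_ne_zero_iff.2 hw0), one_smul]
    have hx : ‖(‖v₀‖ : ℝ) • v + (‖w₀‖ : ℝ) • w‖ = 1 := by
      rw [hv', hw']; exact hxS
    have := aux_key hDconv hvD hwD hv1 hw1 (norm_pos_iff.2 hv0) (norm_pos_iff.2 hw0) hx
    rwa [hv', hw'] at this
end
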